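/- arXiv:2201.08604 — 6 statements merged into one kernel-verified Lean document; each statement's English description precedes it below -/
import Mathlib

section
/- Let z₁, …, zₙ be real numbers, γ > 0, and let φₙ(t) = (1/n) ∑_{j=1}^n e^{i t z_j} be their empirical characteristic function. Then n ∫_{−∞}^{∞} |φₙ(t) − e^{-t²/2}|² e^{-γ t²} dt = √(π/γ) (1/n) ∑_{j,k=1}^n e^{-(z_j − z_k)²/(4γ)} + n √(π/(1+γ)) − 2 √(2π/(1+2γ)) ∑_{j=1}^n e^{-z_j²/(2+4γ)}. -/
open MeasureTheory Real
open Complex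

lemma integrable_cos_gauss (a b : ℝ) (ha : 0 < a) :
    Integrable (fun t : ℝ => Real.cos (b * t) * Real.exp (-a * t ^ 2)) := by
  refine (integrable_exp_neg_mul_sq ha).mono' (Continuous.aestronglyMeasurable (by continuity)) ?_
  filter_upwards with t
  rw [norm_mul, Real.norm_eq_abs, Real.norm_eq_abs, Real.abs_exp]
  calc |Real.cos (b*t)| * Real.exp (-a*t^2) ≤ 1 * Real.exp (-a*t^2) := by
        gcongr; exact Real.abs_cos_le_one _
    _ = Real.exp (-a*t^2) := one_mul _

lemma gauss_cos (a b : ℝ) (ha : 0 < a) :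
    ∫ t : ℝ, Real.cos (b * t) * Real.exp (-a * t ^ 2)
      = Real.sqrt (π / a) * Real.exp (-b ^ 2 / (4 * a)) := by
  have h := fourierIntegral_gaussian (b := (a : ℂ)) (by simpa using ha) (b : ℂ)
  have hint : Integrable (fun x : ℝ => Complex.exp (I * b * x) * Complex.exp (-(a:ℂ) * x ^ 2)) := by
    have h2 := integrable_cexp_quadratic (b := (a:ℂ)) (by simpa using ha) (I * b) 0
    refine h2.congr' (Continuous.aestronglyMeasurable (by continuity)) ?_
    filter_upwards with x
    rw [← Complex.exp_add]; ring_nf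
  have hre := congrArg Complex.re h
  rw [← RCLike.re_to_complex, ← integral_re hint] at hre
  have hL : ∀ x : ℝ, RCLike.re (Complex.exp (I * b * x) * Complex.exp (-(a:ℂ) * x ^ 2))
      = Real.cos (b * x) * Real.exp (-a * x ^ 2) := by
    intro x
    have hform : Complex.exp (I * b * x) * Complex.exp (-(a:ℂ) * x ^ 2)
        = ((Real.cos (b*x) * Real.exp (-a*x^2) : ℝ) : ℂ)
          + ((Real.sin (b*x) * Real.exp (-a*x^2) : ℝ) : ℂ) * I := by
      rw [show (-(a:ℂ) * (x:ℂ) ^ 2 : ℂ) = ((-a * x^2 : ℝ) : ℂ) by push_cast; ring,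
        show (I * (b:ℂ) * (x:ℂ) : ℂ) = ((b * x : ℝ) : ℂ) * I by push_cast; ring,
        Complex.exp_mul_I, ← Complex.ofReal_exp, ← Complex.ofReal_cos, ← Complex.ofReal_sin]
      push_cast
      ring
    rw [hform, RCLike.re_to_complex]
    simp only [Complex.add_re, Complex.mul_I_re, Complex.ofReal_re, Complex.ofReal_im,
      neg_zero, add_zero]
  simp_rw [hL] at hre
  rw [hre]
  have h1 : ((π : ℂ) / a) ^ (1/2 : ℂ) = (Real.sqrt (π / a) : ℂ) := by
    rw [show ((π : ℂ)/a) = ((π/a : ℝ) : ℂ) by push_cast; ring,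
      show (1/2 : ℂ) = ((1/2 : ℝ) : ℂ) by norm_num,
      ← Complex.ofReal_cpow (by positivity) (1/2 : ℝ),
      Real.sqrt_eq_rpow]
  rw [h1, show (-(b:ℂ) ^ 2 / (4 * (a:ℂ))) = ((-b^2/(4*a) : ℝ) : ℂ) by push_cast; ring,
    ← Complex.ofReal_exp, ← Complex.ofReal_mul, Complex.ofReal_re]


/-- For real numbers `z₁,…,zₙ`, `γ > 0`, and `φₙ` their empirical
characteristic function,
`n ∫ |φₙ(t) − e^{−t²/2}|² e^{−γt²} dt
  = √(π/γ) (1/n) ∑_{j,k} e^{−(zⱼ−z_k)²/(4γ)} + n √(π/(1+γ))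
    − 2 √(2π/(1+2γ)) ∑ⱼ e^{−zⱼ²/(2+4γ)}`. -/
theorem bhep_statistic_formula (n : ℕ) (hn : 0 < n) (z : Fin n → ℝ)
    (γ : ℝ) (hγ : 0 < γ) :
    (n : ℝ) * ∫ t : ℝ,
        (‖(n : ℂ)⁻¹ * ∑ j, Complex.exp (Complex.I * t * z j)
            - (Real.exp (-t ^ 2 / 2) : ℂ)‖) ^ 2 * Real.exp (-γ * t ^ 2) =
      Real.sqrt (π / γ) * ((n : ℝ)⁻¹ *
          ∑ j, ∑ k, Real.exp (-(z j - z k) ^ 2 / (4 * γ)))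
        + (n : ℝ) * Real.sqrt (π / (1 + γ))
        - 2 * Real.sqrt (2 * π / (1 + 2 * γ)) *
            ∑ j, Real.exp (-(z j) ^ 2 / (2 + 4 * γ)) := by
  have hn' : (n : ℝ) ≠ 0 := Nat.cast_ne_zero.mpr hn.ne'
  have hγ2 : (0:ℝ) < 1/2 + γ := by linarith
  have hγ3 : (0:ℝ) < 1 + γ := by linarith
  -- pointwise identity
  have key : ∀ t : ℝ,
      (‖(n : ℂ)⁻¹ * ∑ j, Complex.exp (Complex.I * t * z j)
          - (Real.exp (-t ^ 2 / 2) : ℂ)‖) ^ 2 * Real.exp (-γ * t ^ 2)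
      = (n : ℝ)⁻¹ * (n : ℝ)⁻¹ *
            ∑ j, ∑ k, Real.cos ((z j - z k) * t) * Real.exp (-γ * t ^ 2)
        - 2 * (n : ℝ)⁻¹ * ∑ j, Real.cos (z j * t) * Real.exp (-(1/2 + γ) * t ^ 2)
        + Real.exp (-(1 + γ) * t ^ 2) := by
    intro t
    have hw : (n : ℂ)⁻¹ * ∑ j, Complex.exp (Complex.I * t * z j)
          - (Real.exp (-t ^ 2 / 2) : ℂ)
        = (((n : ℝ)⁻¹ * ∑ j, Real.cos (z j * t) - Real.exp (-t ^ 2 / 2) : ℝ) : ℂ)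
          + (((n : ℝ)⁻¹ * ∑ j, Real.sin (z j * t) : ℝ) : ℂ) * I := by
      have hj : ∀ j, Complex.exp (Complex.I * t * z j)
          = ((Real.cos (z j * t) : ℝ) : ℂ) + ((Real.sin (z j * t) : ℝ) : ℂ) * I := by
        intro j
        rw [show (Complex.I * (t:ℂ) * (z j : ℂ)) = ((z j * t : ℝ) : ℂ) * I by push_cast; ring,
          Complex.exp_mul_I, ← Complex.ofReal_cos, ← Complex.ofReal_sin]
      simp_rw [hj]
      push_cast
      rw [Finset.sum_add_distrib, ← Finset.sum_mul]
      ring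
    rw [hw, Complex.sq_norm, Complex.normSq_add_mul_I]
    have hsum : (∑ j, Real.cos (z j * t)) ^ 2 + (∑ j, Real.sin (z j * t)) ^ 2
        = ∑ j, ∑ k, Real.cos ((z j - z k) * t) := by
      simp_rw [sub_mul, Real.cos_sub, Finset.sum_add_distrib, ← Finset.mul_sum]
      rw [← Finset.sum_mul, ← Finset.sum_mul, sq, sq]
    have hE2 : Real.exp (-(1/2 + γ) * t ^ 2)
        = Real.exp (-t ^ 2 / 2) * Real.exp (-γ * t ^ 2) := by
      rw [← Real.exp_add]; congr 1; ring
    have hE3 : Real.exp (-(1 + γ) * t ^ 2)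
        = Real.exp (-t ^ 2 / 2) ^ 2 * Real.exp (-γ * t ^ 2) := by
      rw [show Real.exp (-t ^ 2 / 2) ^ 2 = Real.exp (-t ^ 2 / 2) * Real.exp (-t ^ 2 / 2) from sq _,
        ← Real.exp_add, ← Real.exp_add]; congr 1; ring
    simp_rw [← Finset.sum_mul]
    rw [hE2, hE3]
    linear_combination ((n:ℝ)⁻¹ * (n:ℝ)⁻¹ * Real.exp (-γ * t ^ 2)) * hsum
  simp_rw [key]
  -- integrability
  have i1 : Integrable (fun t : ℝ => (n : ℝ)⁻¹ * (n : ℝ)⁻¹ *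
      ∑ j, ∑ k, Real.cos ((z j - z k) * t) * Real.exp (-γ * t ^ 2)) :=
    (integrable_finset_sum _ fun j _ => integrable_finset_sum _ fun k _ =>
      integrable_cos_gauss γ (z j - z k) hγ).const_mul _
  have i2 : Integrable (fun t : ℝ => 2 * (n : ℝ)⁻¹ *
      ∑ j, Real.cos (z j * t) * Real.exp (-(1/2 + γ) * t ^ 2)) :=
    (integrable_finset_sum _ fun j _ =>
      integrable_cos_gauss (1/2 + γ) (z j) hγ2).const_mul _
  have i3 : Integrable (fun t : ℝ => Real.exp (-(1 + γ) * t ^ 2)) :=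
    integrable_exp_neg_mul_sq hγ3
  have i12 : Integrable (fun t : ℝ => (n : ℝ)⁻¹ * (n : ℝ)⁻¹ *
      (∑ j, ∑ k, Real.cos ((z j - z k) * t) * Real.exp (-γ * t ^ 2))
      - 2 * (n : ℝ)⁻¹ * ∑ j, Real.cos (z j * t) * Real.exp (-(1/2 + γ) * t ^ 2)) := i1.sub i2
  rw [integral_add i12 i3, integral_sub i1 i2, integral_const_mul, integral_const_mul,
    integral_finset_sum _ (fun j _ => integrable_finset_sum _ fun k _ =>
      integrable_cos_gauss γ (z j - z k) hγ),
    integral_finset_sum _ (fun j _ => integrable_cos_gauss (1/2 + γ) (z j) hγ2)]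
  simp_rw [integral_finset_sum _ (fun k _ => integrable_cos_gauss γ _ hγ),
    gauss_cos γ _ hγ, gauss_cos (1/2 + γ) _ hγ2, integral_gaussian]
  have hs : Real.sqrt (π / (1/2 + γ)) = Real.sqrt (2 * π / (1 + 2 * γ)) := by
    congr 1; field_simp
  have he : ∀ j : Fin n, Real.exp (-(z j) ^ 2 / (4 * (1/2 + γ)))
      = Real.exp (-(z j) ^ 2 / (2 + 4 * γ)) := by
    intro j; congr 1; ring_nf
  simp_rw [hs, he]
  rw [show ∀ S T U : ℝ, (n:ℝ) * ((n:ℝ)⁻¹ * (n:ℝ)⁻¹ * S - 2 * (n:ℝ)⁻¹ * T + U)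
      = (n:ℝ)⁻¹ * S + (n:ℝ) * U - 2 * T from fun S T U => by field_simp; ring]
  simp_rw [← Finset.mul_sum]
  ring
end

section
/- Let X, X₁, X₂ be independent identically distributed real random variables, let μ ∈ ℝ and σ > 0, let ψ(t) = E[e^{i t (X−μ)/σ}], and let γ > 0. Assume all expectations below are finite. Then ∫_{−∞}^{∞} |ψ(t) − e^{-t²/2}|² e^{-γ t²} dt = √(π/(1+γ)) + √(π/γ) E[ exp( −(X₁−X₂)²/(4γσ²) ) ] − 2 √(2π/(1+2γ)) E[ exp( −(X₁−μ)²/((2+4γ)σ²) ) ]. -/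
open MeasureTheory Real

lemma gauss_cexp {a : ℝ} (ha : 0 < a) (u : ℝ) :
    (∫ t : ℝ, Complex.exp (Complex.I * u * t) * Complex.exp (-(a : ℂ) * t ^ 2))
      = ((Real.sqrt (π / a) * Real.exp (-u ^ 2 / (4 * a)) : ℝ) : ℂ) := by
  have h := fourierIntegral_gaussian (b := (a : ℂ)) (by simpa using ha) (u : ℂ)
  rw [h]
  have h1 : ((π : ℂ) / a) ^ (1 / 2 : ℂ) = ((Real.sqrt (π / a) : ℝ) : ℂ) := by
    rw [Real.sqrt_eq_rpow, Complex.ofReal_cpow (by positivity)]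
    push_cast
    ring_nf
  rw [h1, Complex.ofReal_mul, Complex.ofReal_exp]
  congr 2
  push_cast
  ring_nf

lemma fubini_gauss {a : ℝ} (ha : 0 < a) {α : Type*} [MeasurableSpace α]
    (Q : Measure α) [IsProbabilityMeasure Q] (v : α → ℝ) (hv : Measurable v) :
    (∫ t : ℝ, (∫ x, Complex.exp (Complex.I * (v x) * t) ∂Q)
        * Complex.exp (-(a : ℂ) * t ^ 2))
      = ((∫ x, Real.sqrt (π / a) * Real.exp (-(v x) ^ 2 / (4 * a)) ∂Q : ℝ) : ℂ) := by
  have hmeas : AEStronglyMeasurable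
      (Function.uncurry fun (t : ℝ) (x : α) =>
        Complex.exp (Complex.I * (v x) * t) * Complex.exp (-(a : ℂ) * t ^ 2))
      (volume.prod Q) := by
    apply Measurable.aestronglyMeasurable
    fun_prop
  have hnorm : ∀ (t : ℝ) (x : α),
      ‖Complex.exp (Complex.I * (v x) * t) * Complex.exp (-(a : ℂ) * t ^ 2)‖
        = Real.exp (-a * t ^ 2) := by
    intro t x
    rw [norm_mul, Complex.norm_exp,
      Complex.norm_exp]
    simp [Complex.mul_re, ← Complex.ofReal_pow]
  have hintb : Integrable (fun q : ℝ × α => Real.exp (-a * q.1 ^ 2) * 1)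
      (volume.prod Q) := (integrable_exp_neg_mul_sq ha).mul_prod (integrable_const 1)
  have hint : Integrable
      (Function.uncurry fun (t : ℝ) (x : α) =>
        Complex.exp (Complex.I * (v x) * t) * Complex.exp (-(a : ℂ) * t ^ 2))
      (volume.prod Q) := by
    refine hintb.mono' hmeas ?_
    filter_upwards with q
    obtain ⟨t, x⟩ := q
    simp only [Function.uncurry_apply_pair, hnorm t x, mul_one, le_refl]
  calc (∫ t : ℝ, (∫ x, Complex.exp (Complex.I * (v x) * t) ∂Q)
        * Complex.exp (-(a : ℂ) * t ^ 2))
      = ∫ t : ℝ, ∫ x, Complex.exp (Complex.I * (v x) * t)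
          * Complex.exp (-(a : ℂ) * t ^ 2) ∂Q := by
        simp_rw [MeasureTheory.integral_mul_const]
    _ = ∫ x, (∫ t : ℝ, Complex.exp (Complex.I * (v x) * t)
          * Complex.exp (-(a : ℂ) * t ^ 2)) ∂Q := integral_integral_swap hint
    _ = ∫ x, ((Real.sqrt (π / a) * Real.exp (-(v x) ^ 2 / (4 * a)) : ℝ) : ℂ) ∂Q := by
        congr 1; funext x; exact gauss_cexp ha (v x)
    _ = _ := integral_ofReal

/-- Let `X, X₁, X₂` be i.i.d. real random variables with common law `P`
(the i.i.d. structure being encoded by the measure `P` and its product), `μ ∈ ℝ`,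
`σ > 0`, `ψ(t) = E[e^{it(X−μ)/σ}]`, `γ > 0`, and assume all expectations below are
finite.  Then
`∫ |ψ(t) − e^{−t²/2}|² e^{−γt²} dt = √(π/(1+γ))
  + √(π/γ) E[exp(−(X₁−X₂)²/(4γσ²))] − 2√(2π/(1+2γ)) E[exp(−(X₁−μ)²/((2+4γ)σ²))]`. -/
theorem bhep_population_limit (P : Measure ℝ) [IsProbabilityMeasure P]
    (μ : ℝ) (σ : ℝ) (hσ : 0 < σ) (γ : ℝ) (hγ : 0 < γ)
    (ψ : ℝ → ℂ)
    (hψ : ∀ t : ℝ, ψ t = ∫ x, Complex.exp (Complex.I * t * ((x - μ) / σ)) ∂P)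
    (hint1 : Integrable
      (fun p : ℝ × ℝ => Real.exp (-(p.1 - p.2) ^ 2 / (4 * γ * σ ^ 2))) (P.prod P))
    (hint2 : Integrable
      (fun x : ℝ => Real.exp (-(x - μ) ^ 2 / ((2 + 4 * γ) * σ ^ 2))) P) :
    ∫ t : ℝ, (‖ψ t - (Real.exp (-t ^ 2 / 2) : ℂ)‖) ^ 2
        * Real.exp (-γ * t ^ 2) =
      Real.sqrt (π / (1 + γ))
        + Real.sqrt (π / γ) *
            ∫ p : ℝ × ℝ, Real.exp (-(p.1 - p.2) ^ 2 / (4 * γ * σ ^ 2)) ∂(P.prod P)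
        - 2 * Real.sqrt (2 * π / (1 + 2 * γ)) *
            ∫ x : ℝ, Real.exp (-(x - μ) ^ 2 / ((2 + 4 * γ) * σ ^ 2)) ∂P := by
  have hσ' : σ ≠ 0 := ne_of_gt hσ
  -- continuity of ψ
  have hψfun : ψ = fun t : ℝ => ∫ x, Complex.exp (Complex.I * t * ((x - μ) / σ)) ∂P :=
    funext hψ
  have hnorm1 : ∀ (r s : ℝ), ‖Complex.exp (Complex.I * r * s)‖ = 1 := by
    intro r s
    rw [Complex.norm_exp]
    simp [Complex.mul_re, Complex.mul_im]
  have hψcont : Continuous ψ := by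
    rw [hψfun]
    apply continuous_of_dominated (bound := fun _ : ℝ => (1 : ℝ))
    · intro t
      apply Continuous.aestronglyMeasurable
      fun_prop
    · intro t
      filter_upwards with x
      exact le_of_eq (by simpa using hnorm1 t ((x - μ) / σ))
    · exact integrable_const 1
    · filter_upwards with x
      fun_prop
  have hψ_norm : ∀ t, ‖ψ t‖ ≤ 1 := by
    intro t
    rw [hψ]
    calc ‖∫ x, Complex.exp (Complex.I * t * ((x - μ) / σ)) ∂P‖
        ≤ ∫ x, ‖Complex.exp (Complex.I * t * ((x - μ) / σ))‖ ∂P :=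
          norm_integral_le_integral_norm _
      _ = ∫ (_ : ℝ), (1 : ℝ) ∂P := by
          congr 1; funext x; simpa using hnorm1 t ((x - μ) / σ)
      _ = 1 := by simp
  have hwint : Integrable (fun t : ℝ => Real.exp (-γ * t ^ 2)) :=
    integrable_exp_neg_mul_sq hγ
  -- the three integrands
  have hA : Integrable (fun t : ℝ => Complex.normSq (ψ t) * Real.exp (-γ * t ^ 2)) := by
    refine hwint.mono' ?_ ?_
    · exact ((Complex.continuous_normSq.comp hψcont).mul
        (by fun_prop : Continuous fun t : ℝ => Real.exp (-γ * t ^ 2))).aestronglyMeasurable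
    · filter_upwards with t
      have h1 : Complex.normSq (ψ t) ≤ 1 := by
        rw [Complex.normSq_eq_norm_sq]
        nlinarith [hψ_norm t, norm_nonneg (ψ t)]
      rw [Real.norm_eq_abs, abs_of_nonneg
        (mul_nonneg (Complex.normSq_nonneg _) (Real.exp_pos _).le)]
      nlinarith [Real.exp_pos (-γ * t ^ 2), Complex.normSq_nonneg (ψ t)]
  have hB : Integrable (fun t : ℝ => (ψ t).re *
      (Real.exp (-t ^ 2 / 2) * Real.exp (-γ * t ^ 2))) := by
    refine hwint.mono' ?_ ?_
    · exact ((Complex.continuous_re.comp hψcont).mul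
        (by fun_prop : Continuous fun t : ℝ =>
          Real.exp (-t ^ 2 / 2) * Real.exp (-γ * t ^ 2))).aestronglyMeasurable
    · filter_upwards with t
      have h1 : |(ψ t).re| ≤ 1 := by
        calc |(ψ t).re| ≤ ‖ψ t‖ := Complex.abs_re_le_norm _
          _ ≤ 1 := by exact hψ_norm t
      have h2 : Real.exp (-t ^ 2 / 2) ≤ 1 :=
        Real.exp_le_one_iff.mpr (by nlinarith [sq_nonneg t])
      rw [Real.norm_eq_abs, abs_mul, abs_of_nonneg
        (mul_nonneg (Real.exp_pos _).le (Real.exp_pos _).le)]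
      calc |(ψ t).re| * (Real.exp (-t ^ 2 / 2) * Real.exp (-γ * t ^ 2))
          ≤ 1 * (Real.exp (-t ^ 2 / 2) * Real.exp (-γ * t ^ 2)) :=
            mul_le_mul_of_nonneg_right h1 (by positivity)
        _ = Real.exp (-t ^ 2 / 2) * Real.exp (-γ * t ^ 2) := one_mul _
        _ ≤ 1 * Real.exp (-γ * t ^ 2) :=
            mul_le_mul_of_nonneg_right h2 (Real.exp_pos _).le
        _ = Real.exp (-γ * t ^ 2) := one_mul _
  have hC : Integrable (fun t : ℝ => Real.exp (-(1 + γ) * t ^ 2)) :=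
    integrable_exp_neg_mul_sq (by linarith)
  -- pointwise decomposition
  have hpt : ∀ t : ℝ,
      (‖ψ t - (Real.exp (-t ^ 2 / 2) : ℂ)‖) ^ 2 * Real.exp (-γ * t ^ 2)
        = Complex.normSq (ψ t) * Real.exp (-γ * t ^ 2)
          - 2 * ((ψ t).re * (Real.exp (-t ^ 2 / 2) * Real.exp (-γ * t ^ 2)))
          + Real.exp (-(1 + γ) * t ^ 2) := by
    intro t
    have hg : Real.exp (-(1 + γ) * t ^ 2)
        = Real.exp (-t ^ 2 / 2) * Real.exp (-t ^ 2 / 2) * Real.exp (-γ * t ^ 2) := by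
      rw [← Real.exp_add, ← Real.exp_add]
      congr 1
      ring
    rw [Complex.sq_norm, Complex.normSq_apply, Complex.normSq_apply, Complex.sub_re,
      Complex.sub_im, Complex.ofReal_re, Complex.ofReal_im, hg]
    ring
  rw [show (∫ t : ℝ, (‖ψ t - (Real.exp (-t ^ 2 / 2) : ℂ)‖) ^ 2
        * Real.exp (-γ * t ^ 2))
      = ∫ t : ℝ, (Complex.normSq (ψ t) * Real.exp (-γ * t ^ 2)
          - 2 * ((ψ t).re * (Real.exp (-t ^ 2 / 2) * Real.exp (-γ * t ^ 2)))
          + Real.exp (-(1 + γ) * t ^ 2)) by congr 1; funext t; exact hpt t]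
  have hAB : Integrable (fun t : ℝ => Complex.normSq (ψ t) * Real.exp (-γ * t ^ 2)
      - 2 * ((ψ t).re * (Real.exp (-t ^ 2 / 2) * Real.exp (-γ * t ^ 2)))) :=
    hA.sub (hB.const_mul 2)
  rw [integral_add hAB hC, integral_sub hA (hB.const_mul 2), MeasureTheory.integral_const_mul]
  -- value of C
  have hCval : (∫ t : ℝ, Real.exp (-(1 + γ) * t ^ 2)) = Real.sqrt (π / (1 + γ)) :=
    integral_gaussian _
  -- product form of |ψ|²
  have hψconj : ∀ t : ℝ, ψ t * (starRingEnd ℂ) (ψ t)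
      = ∫ p : ℝ × ℝ, Complex.exp (Complex.I * ((((p.1 - p.2) / σ : ℝ)) : ℂ) * t)
          ∂(P.prod P) := by
    intro t
    calc ψ t * (starRingEnd ℂ) (ψ t)
        = (∫ x, Complex.exp (Complex.I * t * ((x - μ) / σ)) ∂P)
          * ∫ y, (starRingEnd ℂ) (Complex.exp (Complex.I * t * ((y - μ) / σ))) ∂P := by
          rw [hψ, integral_conj]
      _ = ∫ p : ℝ × ℝ, Complex.exp (Complex.I * t * ((p.1 - μ) / σ))
          * (starRingEnd ℂ) (Complex.exp (Complex.I * t * ((p.2 - μ) / σ)))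
          ∂(P.prod P) := (integral_prod_mul _ _).symm
      _ = ∫ p : ℝ × ℝ, Complex.exp (Complex.I * ((((p.1 - p.2) / σ : ℝ)) : ℂ) * t)
          ∂(P.prod P) := by
          congr 1; funext p
          rw [← Complex.exp_conj, ← Complex.exp_add]
          congr 1
          simp only [map_mul, map_sub, map_div₀, Complex.conj_I, Complex.conj_ofReal]
          push_cast
          field_simp
          ring
  -- value of A
  have hAval : (∫ t : ℝ, Complex.normSq (ψ t) * Real.exp (-γ * t ^ 2))
      = Real.sqrt (π / γ) *
          ∫ p : ℝ × ℝ, Real.exp (-(p.1 - p.2) ^ 2 / (4 * γ * σ ^ 2)) ∂(P.prod P) := by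
    have hkey : ∀ t : ℝ, Complex.normSq (ψ t) * Real.exp (-γ * t ^ 2)
        = (ψ t * (starRingEnd ℂ) (ψ t) * Complex.exp (-(γ : ℂ) * t ^ 2)).re := by
      intro t
      have h2 : Complex.exp (-(γ : ℂ) * t ^ 2)
          = ((Real.exp (-γ * t ^ 2) : ℝ) : ℂ) := by
        rw [Complex.ofReal_exp]; push_cast; ring_nf
      rw [Complex.mul_conj, h2, ← Complex.ofReal_mul, Complex.ofReal_re]
    have hFint : Integrable
        (fun t : ℝ => ψ t * (starRingEnd ℂ) (ψ t) * Complex.exp (-(γ : ℂ) * t ^ 2)) := by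
      refine hwint.mono' ?_ ?_
      · exact ((hψcont.mul (Complex.continuous_conj.comp hψcont)).mul
          (by fun_prop : Continuous fun t : ℝ =>
            Complex.exp (-(γ : ℂ) * t ^ 2))).aestronglyMeasurable
      · filter_upwards with t
        have h2 : Complex.exp (-(γ : ℂ) * t ^ 2)
            = ((Real.exp (-γ * t ^ 2) : ℝ) : ℂ) := by
          rw [Complex.ofReal_exp]; push_cast; ring_nf
        rw [Complex.mul_conj, h2, ← Complex.ofReal_mul, Complex.norm_real,
          Real.norm_eq_abs, abs_of_nonneg
            (mul_nonneg (Complex.normSq_nonneg _) (Real.exp_pos _).le)]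
        have h1 : Complex.normSq (ψ t) ≤ 1 := by
          rw [Complex.normSq_eq_norm_sq]
          nlinarith [hψ_norm t, norm_nonneg (ψ t)]
        nlinarith [Real.exp_pos (-γ * t ^ 2), Complex.normSq_nonneg (ψ t)]
    have hfub := fubini_gauss hγ (P.prod P) (fun p : ℝ × ℝ => (p.1 - p.2) / σ)
      (by fun_prop)
    calc (∫ t : ℝ, Complex.normSq (ψ t) * Real.exp (-γ * t ^ 2))
        = ∫ t : ℝ, (ψ t * (starRingEnd ℂ) (ψ t) * Complex.exp (-(γ : ℂ) * t ^ 2)).re := by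
          congr 1; funext t; exact hkey t
      _ = (∫ t : ℝ, ψ t * (starRingEnd ℂ) (ψ t) * Complex.exp (-(γ : ℂ) * t ^ 2)).re :=
          integral_re hFint
      _ = (∫ t : ℝ, (∫ p : ℝ × ℝ, Complex.exp
            (Complex.I * ((((p.1 - p.2) / σ : ℝ)) : ℂ) * t) ∂(P.prod P))
            * Complex.exp (-(γ : ℂ) * t ^ 2)).re := by
          congr 2; funext t; rw [hψconj t]
      _ = ∫ p : ℝ × ℝ, Real.sqrt (π / γ)
            * Real.exp (-((p.1 - p.2) / σ) ^ 2 / (4 * γ)) ∂(P.prod P) := by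
          rw [hfub, Complex.ofReal_re]
      _ = Real.sqrt (π / γ) *
            ∫ p : ℝ × ℝ, Real.exp (-(p.1 - p.2) ^ 2 / (4 * γ * σ ^ 2)) ∂(P.prod P) := by
          rw [← integral_const_mul]
          congr 1; funext p
          have harg : -((p.1 - p.2) / σ) ^ 2 / (4 * γ)
              = -(p.1 - p.2) ^ 2 / (4 * γ * σ ^ 2) := by
            rw [div_pow, neg_div, neg_div, div_div]
            congr 2
            ring
          rw [harg]
  -- value of B
  have hBval : (∫ t : ℝ, (ψ t).re *
        (Real.exp (-t ^ 2 / 2) * Real.exp (-γ * t ^ 2)))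
      = Real.sqrt (2 * π / (1 + 2 * γ)) *
          ∫ x : ℝ, Real.exp (-(x - μ) ^ 2 / ((2 + 4 * γ) * σ ^ 2)) ∂P := by
    have ha : (0 : ℝ) < 1 / 2 + γ := by linarith
    have hkey : ∀ t : ℝ, (ψ t).re * (Real.exp (-t ^ 2 / 2) * Real.exp (-γ * t ^ 2))
        = (ψ t * Complex.exp (-((1 / 2 + γ : ℝ) : ℂ) * t ^ 2)).re := by
      intro t
      have h2 : Complex.exp (-((1 / 2 + γ : ℝ) : ℂ) * t ^ 2)
          = ((Real.exp (-t ^ 2 / 2) * Real.exp (-γ * t ^ 2) : ℝ) : ℂ) := by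
        rw [Complex.ofReal_mul, Complex.ofReal_exp, Complex.ofReal_exp,
          ← Complex.exp_add]
        congr 1
        push_cast
        ring
      rw [h2]
      simp only [Complex.mul_re, Complex.ofReal_re, Complex.ofReal_im, mul_zero,
        sub_zero]
    have hFint : Integrable
        (fun t : ℝ => ψ t * Complex.exp (-((1 / 2 + γ : ℝ) : ℂ) * t ^ 2)) := by
      refine hwint.mono' ?_ ?_
      · exact (hψcont.mul (by fun_prop : Continuous fun t : ℝ =>
          Complex.exp (-((1 / 2 + γ : ℝ) : ℂ) * t ^ 2))).aestronglyMeasurable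
      · filter_upwards with t
        have h2 : Complex.exp (-((1 / 2 + γ : ℝ) : ℂ) * t ^ 2)
            = ((Real.exp (-t ^ 2 / 2) * Real.exp (-γ * t ^ 2) : ℝ) : ℂ) := by
          rw [Complex.ofReal_mul, Complex.ofReal_exp, Complex.ofReal_exp,
            ← Complex.exp_add]
          congr 1
          push_cast
          ring
        rw [norm_mul, h2, Complex.norm_real, Real.norm_eq_abs, abs_of_nonneg
          (mul_nonneg (Real.exp_pos _).le (Real.exp_pos _).le)]
        have h1 := hψ_norm t
        have h2' : Real.exp (-t ^ 2 / 2) ≤ 1 :=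
          Real.exp_le_one_iff.mpr (by nlinarith [sq_nonneg t])
        calc ‖ψ t‖ * (Real.exp (-t ^ 2 / 2) * Real.exp (-γ * t ^ 2))
            ≤ 1 * (Real.exp (-t ^ 2 / 2) * Real.exp (-γ * t ^ 2)) :=
              mul_le_mul_of_nonneg_right h1 (by positivity)
          _ = Real.exp (-t ^ 2 / 2) * Real.exp (-γ * t ^ 2) := one_mul _
          _ ≤ 1 * Real.exp (-γ * t ^ 2) :=
              mul_le_mul_of_nonneg_right h2' (Real.exp_pos _).le
          _ = Real.exp (-γ * t ^ 2) := one_mul _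
    have hfub := fubini_gauss ha P (fun x : ℝ => (x - μ) / σ) (by fun_prop)
    calc (∫ t : ℝ, (ψ t).re * (Real.exp (-t ^ 2 / 2) * Real.exp (-γ * t ^ 2)))
        = ∫ t : ℝ, (ψ t * Complex.exp (-((1 / 2 + γ : ℝ) : ℂ) * t ^ 2)).re := by
          congr 1; funext t; exact hkey t
      _ = (∫ t : ℝ, ψ t * Complex.exp (-((1 / 2 + γ : ℝ) : ℂ) * t ^ 2)).re :=
          integral_re hFint
      _ = (∫ t : ℝ, (∫ x, Complex.exp (Complex.I * ((((x - μ) / σ : ℝ)) : ℂ) * t) ∂P)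
            * Complex.exp (-((1 / 2 + γ : ℝ) : ℂ) * t ^ 2)).re := by
          have hψ' : ∀ t : ℝ, ψ t
              = ∫ x, Complex.exp (Complex.I * ((((x - μ) / σ : ℝ)) : ℂ) * t) ∂P := by
            intro t
            rw [hψ t]
            refine integral_congr_ae (Filter.Eventually.of_forall fun x => ?_)
            have hx : Complex.I * (t : ℂ) * (((x : ℂ) - (μ : ℂ)) / (σ : ℂ))
                = Complex.I * ((((x - μ) / σ : ℝ)) : ℂ) * (t : ℂ) := by
              push_cast
              ring
            simp only [hx]
          simp_rw [hψ']
      _ = ∫ x : ℝ, Real.sqrt (π / (1 / 2 + γ))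
            * Real.exp (-((x - μ) / σ) ^ 2 / (4 * (1 / 2 + γ))) ∂P := by
          rw [hfub, Complex.ofReal_re]
      _ = Real.sqrt (2 * π / (1 + 2 * γ)) *
            ∫ x : ℝ, Real.exp (-(x - μ) ^ 2 / ((2 + 4 * γ) * σ ^ 2)) ∂P := by
          rw [← integral_const_mul]
          congr 1; funext x
          have hs : Real.sqrt (π / (1 / 2 + γ)) = Real.sqrt (2 * π / (1 + 2 * γ)) := by
            congr 1
            rw [div_eq_div_iff (by linarith) (by linarith)]
            ring
          rw [hs]
          have harg : -((x - μ) / σ) ^ 2 / (4 * (1 / 2 + γ))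
              = -(x - μ) ^ 2 / ((2 + 4 * γ) * σ ^ 2) := by
            rw [div_pow, neg_div, neg_div, div_div]
            congr 2
            ring
          rw [harg]
  rw [hAval, hBval, hCval]
  ring
end

section
/- For every γ > 0, ∫_{−∞}^{∞} ( π t / sinh(π t) )² e^{-γ|t|} dt = (1/π) ( 2 ζ₂(1 + γ/(2π)) − (γ/π) ζ₃(1 + γ/(2π)) ), where ζ_s(x) = ∑_{k=0}^{∞} (k + x)^{-s} is the Hurwitz zeta function (here evaluated at s = 2 and s = 3), and the integrand at t = 0 is understood by continuity (πt/sinh(πt) → 1 as t → 0). -/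
open MeasureTheory Real


lemma aux_integral (a : ℝ) (ha : 0 < a) :
    ∫ t in Set.Ioi (0:ℝ), t ^ 2 * Real.exp (-(a * t)) = 2 / a ^ 3 := by
  have h := integral_rpow_mul_exp_neg_mul_Ioi (a := 3) (r := a) (by norm_num) ha
  have h2 : ∫ t in Set.Ioi (0:ℝ), t ^ ((3:ℝ) - 1) * Real.exp (-(a * t))
      = ∫ t in Set.Ioi (0:ℝ), t ^ 2 * Real.exp (-(a * t)) := by
    refine setIntegral_congr_fun measurableSet_Ioi (fun t ht => ?_)
    rw [show (3:ℝ) - 1 = ((2:ℕ):ℝ) by norm_num, Real.rpow_natCast]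
  rw [h2] at h
  rw [h, show (3:ℝ) = ((2:ℕ):ℝ) + 1 by norm_num, Real.Gamma_nat_eq_factorial,
    show ((2:ℕ):ℝ) + 1 = ((3:ℕ):ℝ) by norm_num, Real.rpow_natCast]
  field_simp
  norm_num [Nat.factorial]

lemma aux_integrable (a : ℝ) (ha : 0 < a) :
    IntegrableOn (fun t : ℝ => t ^ 2 * Real.exp (-(a * t))) (Set.Ioi 0) := by
  have h := Real.GammaIntegral_convergent (s := 3) (by norm_num)
  have h2 : IntegrableOn (fun x : ℝ => Real.exp (-(a * x)) * (a * x) ^ ((3:ℝ) - 1))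
      (Set.Ioi 0) := by
    have := (integrableOn_Ioi_comp_mul_left_iff
      (fun x : ℝ => Real.exp (-x) * x ^ ((3:ℝ) - 1)) 0 ha).mpr (by simpa using h)
    simpa using this
  have h3 : IntegrableOn (fun x : ℝ => (a:ℝ)⁻¹ ^ 2 * (Real.exp (-(a * x)) * (a * x) ^ ((3:ℝ) - 1)))
      (Set.Ioi 0) := h2.const_mul _
  refine h3.congr_fun (fun x hx => ?_) measurableSet_Ioi
  have hx0 : (0:ℝ) < x := hx
  have : (a * x) ^ ((3:ℝ) - 1) = (a * x) ^ 2 := by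
    rw [show (3:ℝ) - 1 = ((2:ℕ):ℝ) by norm_num, Real.rpow_natCast]
  beta_reduce
  rw [this]
  field_simp

lemma sinh_sq_inv_hasSum (x : ℝ) (hx : 0 < x) :
    HasSum (fun k : ℕ => 4 * ((k:ℝ) + 1) * Real.exp (-(2 * ((k:ℝ) + 1) * x)))
      ((Real.sinh x ^ 2)⁻¹) := by
  set r : ℝ := Real.exp (-(2 * x)) with hrdef
  have hr0 : 0 < r := Real.exp_pos _
  have hr1 : r < 1 := by
    rw [hrdef, Real.exp_lt_one_iff]; nlinarith
  have h1r : (1:ℝ) - r ≠ 0 := by nlinarith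
  have h1 : HasSum (fun k : ℕ => (k:ℝ) * r ^ k) (r / (1 - r) ^ 2) :=
    hasSum_coe_mul_geometric_of_norm_lt_one (by rwa [Real.norm_eq_abs, abs_of_pos hr0])
  have h2 : HasSum (fun k : ℕ => r ^ k) ((1 - r)⁻¹) :=
    hasSum_geometric_of_lt_one hr0.le hr1
  have h3 : HasSum (fun k : ℕ => ((k:ℝ) + 1) * r ^ k) (((1 - r) ^ 2)⁻¹) := by
    have h := h1.add h2
    convert h using 1
    · ext k; ring
    · field_simp; ring
  have h4 := h3.mul_left (4 * r)
  have hval : (Real.sinh x ^ 2)⁻¹ = 4 * r * ((1 - r) ^ 2)⁻¹ := by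
    have hex : Real.exp x ≠ 0 := (Real.exp_pos _).ne'
    have hsinh : Real.sinh x = Real.exp x * (1 - r) / 2 := by
      rw [Real.sinh_eq, hrdef]
      have h : Real.exp x * Real.exp (-(2 * x)) = Real.exp (-x) := by
        rw [← Real.exp_add]; ring_nf
      rw [mul_sub, mul_one, h]
    have hrx : r * Real.exp x ^ 2 = 1 := by
      rw [hrdef, pow_two, ← Real.exp_add, ← Real.exp_add]; norm_num; ring
    rw [hsinh]
    field_simp
    nlinarith [Real.exp_pos x, sq_nonneg (1 - r)]
  rw [hval]
  refine HasSum.congr_fun h4 fun k => ?_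
  have hrk : r ^ (k + 1) = Real.exp (-(2 * ((k:ℝ) + 1) * x)) := by
    rw [hrdef, ← Real.exp_nat_mul]
    push_cast; ring_nf
  calc 4 * ((k:ℝ) + 1) * Real.exp (-(2 * ((k:ℝ) + 1) * x))
      = 4 * ((k:ℝ) + 1) * r ^ (k + 1) := by rw [hrk]
    _ = 4 * r * (((k:ℝ) + 1) * r ^ k) := by ring

/-- For every `γ > 0`,
`∫ (πt/sinh(πt))² e^{−γ|t|} dt = (1/π)(2 ζ₂(1 + γ/(2π)) − (γ/π) ζ₃(1 + γ/(2π)))`,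
where `ζ_s(x) = ∑_{k≥0} (k+x)^{−s}` and the integrand at `t = 0` is understood by
continuity. -/
theorem logistic_cf_squared_integral (γ : ℝ) (hγ : 0 < γ) :
    ∫ t : ℝ,
        (if t = 0 then (1 : ℝ) else π * t / Real.sinh (π * t)) ^ 2
          * Real.exp (-γ * |t|) =
      (1 / π) * (2 * ∑' k : ℕ, (((k : ℝ) + (1 + γ / (2 * π))) ^ 2)⁻¹
        - (γ / π) * ∑' k : ℕ, (((k : ℝ) + (1 + γ / (2 * π))) ^ 3)⁻¹) := by
  have hπ : 0 < π := Real.pi_pos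
  set G : ℝ → ℝ :=
    fun s => (if s = 0 then (1:ℝ) else π * s / Real.sinh (π * s)) ^ 2 * Real.exp (-γ * s)
    with hG
  have habs : ∀ t : ℝ,
      (if t = 0 then (1:ℝ) else π * t / Real.sinh (π * t)) ^ 2 * Real.exp (-γ * |t|)
        = G |t| := by
    intro t
    rw [hG]
    by_cases ht : t = 0
    · simp [ht]
    · have habs0 : |t| ≠ 0 := abs_ne_zero.mpr ht
      simp only [if_neg ht, if_neg habs0]
      rcases abs_choice t with h | h
      · rw [h]
      · rw [h]
        have h2 : π * -t / Real.sinh (π * -t) = π * t / Real.sinh (π * t) := by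
          rw [show π * -t = -(π * t) by ring, Real.sinh_neg, neg_div_neg_eq]
        rw [h2]
  have hstep1 : (∫ t : ℝ,
      (if t = 0 then (1:ℝ) else π * t / Real.sinh (π * t)) ^ 2 * Real.exp (-γ * |t|))
      = 2 * ∫ x in Set.Ioi (0:ℝ), G x := by
    rw [show (fun t : ℝ =>
        (if t = 0 then (1:ℝ) else π * t / Real.sinh (π * t)) ^ 2 * Real.exp (-γ * |t|))
      = fun t : ℝ => G |t| from funext habs]
    exact integral_comp_abs
  set a : ℕ → ℝ := fun k => 2 * π * ((k:ℝ) + 1) + γ with ha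
  have hapos : ∀ k, 0 < a k := by
    intro k
    simp only [ha]
    positivity
  set g : ℕ → ℝ → ℝ := fun k t => 4 * π ^ 2 * ((k:ℝ) + 1) * (t ^ 2 * Real.exp (-(a k * t)))
    with hg
  have hpt : Set.EqOn G (fun t => ∑' k, g k t) (Set.Ioi 0) := by
    intro t ht
    have ht0 : (0:ℝ) < t := ht
    have hs := (sinh_sq_inv_hasSum (π * t) (by positivity)).tsum_eq
    simp only [hG, if_neg (ne_of_gt ht0)]
    rw [div_pow, div_eq_mul_inv, ← hs]
    calc (π * t) ^ 2 * (∑' k : ℕ, 4 * ((k:ℝ) + 1) * Real.exp (-(2 * ((k:ℝ) + 1) * (π * t))))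
          * Real.exp (-γ * t)
        = ∑' k : ℕ, (π * t) ^ 2
            * (4 * ((k:ℝ) + 1) * Real.exp (-(2 * ((k:ℝ) + 1) * (π * t))))
            * Real.exp (-γ * t) := by
          rw [← tsum_mul_left, ← tsum_mul_right]
      _ = ∑' k : ℕ, g k t := by
          refine tsum_congr fun k => ?_
          simp only [hg]
          have hexp : Real.exp (-(2 * ((k:ℝ) + 1) * (π * t))) * Real.exp (-γ * t)
              = Real.exp (-(a k * t)) := by
            rw [← Real.exp_add]
            congr 1
            simp only [ha]
            ring
          linear_combination (4 * π ^ 2 * ((k:ℝ) + 1) * t ^ 2) * hexp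
  have hint : ∀ k, IntegrableOn (g k) (Set.Ioi 0) := by
    intro k
    simp only [hg]
    exact (aux_integrable (a k) (hapos k)).const_mul _
  have hval : ∀ k, (∫ x in Set.Ioi (0:ℝ), g k x) = 4 * π ^ 2 * ((k:ℝ) + 1) * (2 / a k ^ 3) := by
    intro k
    simp only [hg]
    rw [integral_const_mul, aux_integral (a k) (hapos k)]
  have hnorm : ∀ k, (∫ x in Set.Ioi (0:ℝ), ‖g k x‖) = ∫ x in Set.Ioi (0:ℝ), g k x := by
    intro k
    refine setIntegral_congr_fun measurableSet_Ioi (fun x hx => ?_)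
    have hx0 : (0:ℝ) < x := hx
    rw [Real.norm_eq_abs, abs_of_nonneg]
    simp only [hg]
    positivity
  have hbase : Summable (fun k : ℕ => (((k:ℝ) + 1) ^ 2)⁻¹) := by
    have h : Summable (fun n : ℕ => 1 / (n:ℝ) ^ 2) :=
      summable_one_div_nat_pow.mpr one_lt_two
    have h2 := (summable_nat_add_iff 1).mpr h
    refine h2.congr fun n => ?_
    push_cast
    rw [one_div]
  have hswap_sum : Summable (fun k : ℕ => ∫ x in Set.Ioi (0:ℝ), ‖g k x‖) := by
    refine Summable.of_nonneg_of_le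
      (fun k => integral_nonneg fun x => norm_nonneg _) (fun k => ?_) (hbase.mul_left π⁻¹)
    rw [hnorm k, hval k]
    have h1 : 2 * π * ((k:ℝ) + 1) ≤ a k := by simp only [ha]; linarith
    have hk1 : (0:ℝ) < (k:ℝ) + 1 := by positivity
    calc 4 * π ^ 2 * ((k:ℝ) + 1) * (2 / a k ^ 3)
        ≤ 4 * π ^ 2 * ((k:ℝ) + 1) * (2 / (2 * π * ((k:ℝ) + 1)) ^ 3) := by
          gcongr
      _ = π⁻¹ * (((k:ℝ) + 1) ^ 2)⁻¹ := by
          field_simp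
          ring
  have hswap := integral_tsum_of_summable_integral_norm
    (μ := (volume : Measure ℝ).restrict (Set.Ioi 0)) hint hswap_sum
  have hGint : (∫ x in Set.Ioi (0:ℝ), G x) = ∑' k, ∫ x in Set.Ioi (0:ℝ), g k x := by
    rw [setIntegral_congr_fun measurableSet_Ioi hpt]
    exact hswap.symm
  obtain ⟨b, hbdef⟩ : ∃ b : ℝ, b = 1 + γ / (2 * π) := ⟨_, rfl⟩
  rw [← hbdef]
  have hb1 : (1:ℝ) ≤ b := by
    have h : 0 < γ / (2 * π) := by positivity
    simp only [hbdef]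
    linarith
  have hkbpos : ∀ k : ℕ, (0:ℝ) < (k:ℝ) + b := by
    intro k
    have : (0:ℝ) ≤ (k:ℝ) := Nat.cast_nonneg k
    linarith
  have hkb : ∀ k : ℕ, ((k:ℝ) + 1) ≤ (k:ℝ) + b := fun k => by linarith
  have hS2 : Summable (fun k : ℕ => (((k:ℝ) + b) ^ 2)⁻¹) := by
    refine Summable.of_nonneg_of_le (fun k => by positivity) (fun k => ?_) hbase
    have hk1 : (0:ℝ) < (k:ℝ) + 1 := by positivity
    exact inv_anti₀ (by positivity) (pow_le_pow_left₀ hk1.le (hkb k) 2)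
  have hS3 : Summable (fun k : ℕ => (((k:ℝ) + b) ^ 3)⁻¹) := by
    refine Summable.of_nonneg_of_le (fun k => by positivity) (fun k => ?_) hbase
    have hk1 : (0:ℝ) < (k:ℝ) + 1 := by positivity
    have hb1' : (1:ℝ) ≤ (k:ℝ) + b := le_trans (by linarith) (hkb k)
    have h2 : ((k:ℝ) + 1) ^ 2 ≤ ((k:ℝ) + b) ^ 2 := pow_le_pow_left₀ hk1.le (hkb k) 2
    have h3 : ((k:ℝ) + b) ^ 2 ≤ ((k:ℝ) + b) ^ 3 := pow_le_pow_right₀ hb1' (by norm_num)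
    exact inv_anti₀ (by positivity) (le_trans h2 h3)
  have hvk : ∀ k : ℕ, 4 * π ^ 2 * ((k:ℝ) + 1) * (2 / a k ^ 3)
      = (1 / π) * (((k:ℝ) + b) ^ 2)⁻¹ - (γ / (2 * π ^ 2)) * (((k:ℝ) + b) ^ 3)⁻¹ := by
    intro k
    have hπ0 : π ≠ 0 := ne_of_gt hπ
    have hγeq : γ = 2 * π * b - 2 * π := by rw [hbdef]; field_simp; ring
    have hak : a k = 2 * π * ((k:ℝ) + b) := by
      simp only [ha]
      rw [hγeq]; ring
    rw [hak, hγeq]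
    have h0 := hkbpos k
    field_simp
    ring
  rw [hstep1, hGint]
  have hfin : (∑' k, ∫ x in Set.Ioi (0:ℝ), g k x)
      = (1 / π) * (∑' k : ℕ, (((k:ℝ) + b) ^ 2)⁻¹)
        - (γ / (2 * π ^ 2)) * (∑' k : ℕ, (((k:ℝ) + b) ^ 3)⁻¹) := by
    rw [tsum_congr (fun k => (hval k).trans (hvk k))]
    rw [Summable.tsum_sub (hS2.mul_left _) (hS3.mul_left _), tsum_mul_left, tsum_mul_left]
  rw [hfin]
  have hπ0 : π ≠ 0 := ne_of_gt hπ
  field_simp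
end

section
/- For every γ > 0 and x ∈ ℝ, ∫_{−∞}^{∞} cos(x t) ( π t / sinh(π t) ) e^{-γ|t|} dt = (1/π) ( S_γ^{(1)}(x) − (x²/(2π²)) S_γ^{(2)}(x) ), where S_γ^{(m)}(x) = ∑_{k=0}^{∞} [ (x/(2π))² + ((γ+π)/(2π) + k)² ]^{-m}, and the integrand at t = 0 is understood by continuity. -/
open MeasureTheory Real

section LogisticAux
open Set Filter Complex

section Aux

lemma myIntegrableOn_id_mul_exp {a : ℝ} (ha : 0 < a) :
    IntegrableOn (fun t : ℝ => t * Real.exp (-a * t)) (Ioi 0) := by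
  have h := integrableOn_rpow_mul_exp_neg_mul_rpow (p := 1) (s := 1) (b := a)
    (by norm_num) zero_lt_one ha
  refine h.congr_fun (fun x hx => ?_) measurableSet_Ioi
  norm_num [Real.rpow_one]

lemma myIntegrableOn_id_mul_exp' {a : ℝ} (ha : 0 < a) :
    IntegrableOn (fun t : ℝ => t * Real.exp (-(a * t))) (Ioi 0) := by
  have := myIntegrableOn_id_mul_exp ha
  simpa [neg_mul] using this

lemma myTendsto_id_mul_exp {a : ℝ} (ha : 0 < a) :
    Tendsto (fun t : ℝ => t * Real.exp (-(a * t))) atTop (nhds 0) := by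
  have h := tendsto_rpow_mul_exp_neg_mul_atTop_nhds_zero 1 a ha
  refine h.congr' ?_
  filter_upwards [eventually_gt_atTop (0:ℝ)] with t ht
  rw [Real.rpow_one, neg_mul]

lemma myTendsto_exp_neg_mul {a : ℝ} (ha : 0 < a) :
    Tendsto (fun t : ℝ => Real.exp (-(a * t))) atTop (nhds 0) := by
  have h := tendsto_rpow_mul_exp_neg_mul_atTop_nhds_zero 0 a ha
  refine h.congr' ?_
  filter_upwards [eventually_gt_atTop (0:ℝ)] with t ht
  rw [Real.rpow_zero, one_mul, neg_mul]

lemma myNorm_cexp_core (c : ℂ) (t : ℝ) :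
    ‖Complex.exp (-(c * t))‖ = Real.exp (-(c.re * t)) := by
  rw [Complex.norm_exp]
  congr 1
  simp [Complex.mul_re]

lemma myIntegrableOn_cexp_core {a x : ℝ} (ha : 0 < a) :
    IntegrableOn (fun t : ℝ => (t:ℂ) * Complex.exp (-(((a:ℂ) - x * I) * t))) (Ioi 0) := by
  set c : ℂ := (a:ℂ) - x * I with hc
  have hcre : c.re = a := by simp [hc]
  have h0 : IntegrableOn (fun t : ℝ => t * Real.exp (-a * t)) (Ioi 0) :=
    myIntegrableOn_id_mul_exp ha
  refine h0.mono' ?_ ?_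
  · apply Continuous.aestronglyMeasurable
    exact (Complex.continuous_ofReal).mul (Continuous.cexp (by continuity))
  · filter_upwards [ae_restrict_mem measurableSet_Ioi] with t ht
    rw [norm_mul, myNorm_cexp_core, hcre, Complex.norm_real, Real.norm_eq_abs,
      abs_of_pos ht, neg_mul]

lemma myIntegral_cexp_core {a x : ℝ} (ha : 0 < a) :
    ∫ t in Ioi (0:ℝ), (t:ℂ) * Complex.exp (-(((a:ℂ) - x * I) * t))
      = 1 / ((a:ℂ) - x * I)^2 := by
  set c : ℂ := (a:ℂ) - x * I with hc
  have hcre : c.re = a := by simp [hc]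
  have hc0 : c ≠ 0 := by
    intro h
    rw [h] at hcre
    simp at hcre
    exact ha.ne' hcre.symm
  set F : ℝ → ℂ := fun t => -((t:ℂ)/c + 1/c^2) * Complex.exp (-(c * t)) with hF
  have hderiv : ∀ t : ℝ, t ∈ Ici (0:ℝ) → HasDerivAt F ((t:ℂ) * Complex.exp (-(c * t))) t := by
    intro t _
    have hid : HasDerivAt (fun s : ℝ => (s:ℂ)) 1 t := Complex.ofRealCLM.hasDerivAt
    have h1 : HasDerivAt (fun s : ℝ => -((s:ℂ)/c + 1/c^2)) (-(1/c)) t := by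
      have h := ((hid.div_const c).add_const (1/c^2)).neg
      exact h
    have h2 : HasDerivAt (fun s : ℝ => Complex.exp (-(c * s)))
        (Complex.exp (-(c*t)) * (-c)) t := by
      have hin : HasDerivAt (fun s : ℝ => -(c * (s:ℂ))) (-c) t := by
        have h := (hid.const_mul c).neg
        rw [mul_one] at h
        exact h
      exact hin.cexp
    have h3 := h1.mul h2
    refine h3.congr_deriv ?_
    field_simp
    ring
  have hlim : Tendsto F atTop (nhds 0) := by
    apply squeeze_zero_norm'
      (a := fun t : ℝ => (1/‖c‖) * (t * Real.exp (-(a*t))) + ‖1/c^2‖ * Real.exp (-(a*t)))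
    · filter_upwards [eventually_ge_atTop (0:ℝ)] with t ht
      have hn : ‖F t‖ = ‖(t:ℂ)/c + 1/c^2‖ * Real.exp (-(a*t)) := by
        rw [hF]
        simp only [norm_mul, norm_neg]
        rw [myNorm_cexp_core, hcre]
      rw [hn]
      have hb : ‖(t:ℂ)/c + 1/c^2‖ ≤ t/‖c‖ + ‖1/c^2‖ := by
        refine (norm_add_le _ _).trans ?_
        have : ‖(t:ℂ)/c‖ = t/‖c‖ := by
          rw [norm_div, Complex.norm_real, Real.norm_eq_abs, _root_.abs_of_nonneg ht]
        rw [this]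
      calc ‖(t:ℂ)/c + 1/c^2‖ * Real.exp (-(a*t))
          ≤ (t/‖c‖ + ‖1/c^2‖) * Real.exp (-(a*t)) :=
            mul_le_mul_of_nonneg_right hb (Real.exp_nonneg _)
        _ = 1/‖c‖ * (t * Real.exp (-(a*t))) + ‖1/c^2‖ * Real.exp (-(a*t)) := by ring
    · have t1 := (myTendsto_id_mul_exp ha).const_mul (1/‖c‖)
      have t2 := (myTendsto_exp_neg_mul ha).const_mul ‖1/c^2‖
      simpa using t1.add t2
  have hint : IntegrableOn (fun t : ℝ => (t:ℂ) * Complex.exp (-(c * t))) (Ioi 0) :=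
    myIntegrableOn_cexp_core ha
  have key := integral_Ioi_of_hasDerivAt_of_tendsto' hderiv hint hlim
  rw [key, hF]
  simp

lemma myIntegral_t_exp_cos {a x : ℝ} (ha : 0 < a) :
    ∫ t in Ioi (0:ℝ), t * Real.exp (-(a*t)) * Real.cos (x*t)
      = (a^2 - x^2) / (a^2 + x^2)^2 := by
  set c : ℂ := (a:ℂ) - x * I with hc
  have hre : ∀ t : ℝ, ((t:ℂ) * Complex.exp (-(c * t))).re
      = t * Real.exp (-(a*t)) * Real.cos (x*t) := by
    intro t
    rw [Complex.mul_re]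
    have h1 : (-(c * (t:ℂ))).re = -(a*t) := by simp [hc, Complex.mul_re]
    have h2 : (-(c * (t:ℂ))).im = x*t := by simp [hc, Complex.mul_im]
    rw [Complex.exp_re, Complex.exp_im, h1, h2]
    simp
    ring
  have hint := myIntegrableOn_cexp_core (x := x) ha
  calc ∫ t in Ioi (0:ℝ), t * Real.exp (-(a*t)) * Real.cos (x*t)
      = ∫ t in Ioi (0:ℝ), ((t:ℂ) * Complex.exp (-(c * t))).re :=
        integral_congr_ae (Eventually.of_forall fun t => (hre t).symm)
    _ = (∫ t in Ioi (0:ℝ), (t:ℂ) * Complex.exp (-(c * t))).re := integral_re hint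
    _ = (1 / c^2).re := by rw [myIntegral_cexp_core ha]
    _ = (a^2 - x^2) / (a^2 + x^2)^2 := by
        rw [one_div, Complex.inv_re]
        have h1 : (c^2).re = a^2 - x^2 := by
          simp [hc, pow_two, Complex.mul_re]
        have h2 : Complex.normSq (c^2) = (a^2+x^2)^2 := by
          rw [pow_two, map_mul]
          have h3 : Complex.normSq c = a^2 + x^2 := by
            simp [hc, Complex.normSq_apply]
            ring
          rw [h3, pow_two]
          ring
        rw [h1, h2]

lemma myIntegrableOn_t_exp_cos {a x : ℝ} (ha : 0 < a) :
    IntegrableOn (fun t : ℝ => t * Real.exp (-(a*t)) * Real.cos (x*t)) (Ioi 0) := by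
  refine (myIntegrableOn_id_mul_exp' ha).mono' ?_ ?_
  · apply Continuous.aestronglyMeasurable
    continuity
  · filter_upwards [ae_restrict_mem measurableSet_Ioi] with t ht
    rw [Real.norm_eq_abs, abs_mul, abs_mul, abs_of_pos ht, Real.abs_exp]
    have h1 : |Real.cos (x*t)| ≤ 1 := Real.abs_cos_le_one _
    have h2 : (0:ℝ) ≤ t * Real.exp (-(a*t)) := mul_nonneg (le_of_lt ht) (Real.exp_nonneg _)
    exact mul_le_of_le_one_right h2 h1

lemma myIntegral_id_mul_exp {a : ℝ} (ha : 0 < a) :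
    ∫ t in Ioi (0:ℝ), t * Real.exp (-(a*t)) = 1/a^2 := by
  have h := myIntegral_t_exp_cos (a := a) (x := 0) ha
  simp only [zero_mul, Real.cos_zero, mul_one] at h
  rw [h]
  rw [show a^2 - 0^2 = a^2 by ring, show a^2 + 0^2 = a^2 by ring]
  rw [pow_two (a^2)]
  rw [div_mul_eq_div_div_swap, div_self (by positivity)]

lemma mySummable_exp_odd {y : ℝ} (hy : 0 < y) :
    Summable (fun k : ℕ => Real.exp (-((2*(k:ℝ)+1)*y))) := by
  have hq : Real.exp (-(2*y)) < 1 := by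
    rw [Real.exp_lt_one_iff]
    linarith
  have h := (summable_geometric_of_lt_one (Real.exp_nonneg _) hq).mul_left (Real.exp (-y))
  refine h.congr fun k => ?_
  rw [← Real.exp_nat_mul, ← Real.exp_add]
  congr 1
  ring

lemma myTsum_exp_odd {y : ℝ} (hy : 0 < y) :
    ∑' k : ℕ, Real.exp (-((2*(k:ℝ)+1)*y)) = 1 / (2 * Real.sinh y) := by
  have hq : Real.exp (-(2*y)) < 1 := by
    rw [Real.exp_lt_one_iff]; linarith
  calc ∑' k : ℕ, Real.exp (-((2*(k:ℝ)+1)*y))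
      = ∑' k : ℕ, Real.exp (-y) * (Real.exp (-(2*y)))^k := by
        refine tsum_congr fun k => ?_
        rw [← Real.exp_nat_mul, ← Real.exp_add]
        congr 1
        ring
    _ = Real.exp (-y) * (1 - Real.exp (-(2*y)))⁻¹ := by
        rw [tsum_mul_left, tsum_geometric_of_lt_one (Real.exp_nonneg _) hq]
    _ = 1 / (2 * Real.sinh y) := by
        rw [Real.sinh_eq]
        have h1 : (1:ℝ) - Real.exp (-(2*y)) ≠ 0 := by
          have := Real.exp_lt_one_iff.mpr (by linarith : -(2*y) < 0)
          linarith
        have h2 : Real.exp y - Real.exp (-y) ≠ 0 := by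
          have := Real.exp_lt_exp.mpr (by linarith : -y < y)
          linarith
        field_simp
        rw [mul_sub, ← Real.exp_add, ← Real.exp_add]
        norm_num
        rw [div_eq_one_iff_eq (by rwa [mul_comm y 2])]
        congr 2
        ring

lemma mySummable_inv_sq_add {c : ℝ} (hc : 0 < c) :
    Summable (fun k : ℕ => ((c + (k:ℝ))^2)⁻¹) := by
  have h0 : Summable (fun n : ℕ => ((n:ℝ)^2)⁻¹) := summable_nat_pow_inv.mpr one_lt_two
  have h1 : Summable (fun k : ℕ => (((k:ℝ)+1)^2)⁻¹) := by
    have h := (summable_nat_add_iff 1).mpr h0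
    refine h.congr fun k => ?_
    push_cast
    ring_nf
  set m := min c 1 with hm
  have hm0 : 0 < m := lt_min hc one_pos
  refine Summable.of_nonneg_of_le (fun k => by positivity) (fun k => ?_)
    (h1.mul_left (m^2)⁻¹)
  have hk0 : (0:ℝ) ≤ (k:ℝ) := Nat.cast_nonneg k
  have hineq : m * ((k:ℝ)+1) ≤ c + k := by
    have hmc : m ≤ c := min_le_left _ _
    have hm1 : m ≤ 1 := min_le_right _ _
    nlinarith
  have hpos : (0:ℝ) < m * ((k:ℝ)+1) := by positivity
  have hsq : (m * ((k:ℝ)+1))^2 ≤ (c + k)^2 := by nlinarith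
  calc ((c + (k:ℝ))^2)⁻¹ ≤ ((m * ((k:ℝ)+1))^2)⁻¹ := by
        apply inv_anti₀ (by positivity) hsq
    _ = (m^2)⁻¹ * (((k:ℝ)+1)^2)⁻¹ := by
        rw [mul_pow, mul_inv]

end Aux


section Main
open Set Filter Complex

noncomputable def myH (γ x : ℝ) (k : ℕ) (t : ℝ) : ℝ :=
  Real.cos (x*t) * (2*π*t) * Real.exp (-(γ*t)) * Real.exp (-((2*(k:ℝ)+1)*(π*t)))

lemma myH_cont (γ x : ℝ) (k : ℕ) : Continuous (myH γ x k) := by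
  unfold myH
  continuity

lemma myH_norm_le (γ x : ℝ) (k : ℕ) {t : ℝ} (ht : 0 < t) :
    ‖myH γ x k t‖ ≤ 2*π*(t * Real.exp (-((γ + (2*(k:ℝ)+1)*π) * t))) := by
  have e1 : Real.exp (-(γ*t)) * Real.exp (-((2*(k:ℝ)+1)*(π*t)))
      = Real.exp (-((γ + (2*(k:ℝ)+1)*π) * t)) := by
    rw [← Real.exp_add]; congr 1; ring
  have h2πt : (0:ℝ) < 2*π*t := by positivity
  rw [Real.norm_eq_abs]
  unfold myH
  rw [abs_mul, abs_mul, abs_mul, Real.abs_exp, Real.abs_exp, abs_of_pos h2πt]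
  calc |Real.cos (x*t)| * (2*π*t) * Real.exp (-(γ*t)) * Real.exp (-((2*(k:ℝ)+1)*(π*t)))
      ≤ 1 * (2*π*t) * Real.exp (-(γ*t)) * Real.exp (-((2*(k:ℝ)+1)*(π*t))) := by
        gcongr
        exact Real.abs_cos_le_one _
    _ = 2*π*(t * Real.exp (-((γ + (2*(k:ℝ)+1)*π) * t))) := by
        rw [one_mul, mul_assoc, e1]
        ring

lemma myH_integral (γ x : ℝ) (hγ : 0 < γ) (k : ℕ) :
    ∫ t in Ioi (0:ℝ), myH γ x k t
      = 2*π*(((γ + (2*(k:ℝ)+1)*π)^2 - x^2) / (((γ + (2*(k:ℝ)+1)*π)^2 + x^2)^2)) := by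
  set a : ℝ := γ + (2*(k:ℝ)+1)*π with ha_def
  have ha : 0 < a := by
    have : (0:ℝ) < (2*(k:ℝ)+1)*π := by positivity
    simp only [ha_def]; linarith
  have hpt : ∀ t ∈ Ioi (0:ℝ), myH γ x k t = 2*π*(t * Real.exp (-(a*t)) * Real.cos (x*t)) := by
    intro t ht
    unfold myH
    rw [mul_assoc _ (Real.exp (-(γ*t))) _, ← Real.exp_add]
    rw [show -(γ*t) + -((2*(k:ℝ)+1)*(π*t)) = -(a*t) by rw [ha_def]; ring]
    ring
  rw [setIntegral_congr_fun measurableSet_Ioi hpt, integral_const_mul,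
    myIntegral_t_exp_cos ha]

lemma myH_lintegral (γ x : ℝ) (hγ : 0 < γ) (k : ℕ) :
    ∫⁻ t in Ioi (0:ℝ), ‖myH γ x k t‖₊
      ≤ ENNReal.ofReal (2*π*(1/(γ + (2*(k:ℝ)+1)*π)^2)) := by
  set a : ℝ := γ + (2*(k:ℝ)+1)*π with ha_def
  have ha : 0 < a := by
    have : (0:ℝ) < (2*(k:ℝ)+1)*π := by positivity
    simp only [ha_def]; linarith
  calc ∫⁻ t in Ioi (0:ℝ), (‖myH γ x k t‖₊ : ENNReal)
      ≤ ∫⁻ t in Ioi (0:ℝ), ENNReal.ofReal (2*π*(t * Real.exp (-(a*t)))) := by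
        refine lintegral_mono_ae ?_
        filter_upwards [ae_restrict_mem measurableSet_Ioi] with t ht
        rw [← enorm_eq_nnnorm, ← ofReal_norm]
        exact ENNReal.ofReal_le_ofReal (myH_norm_le γ x k ht)
    _ = ENNReal.ofReal (∫ t in Ioi (0:ℝ), 2*π*(t * Real.exp (-(a*t)))) := by
        rw [← ofReal_integral_eq_lintegral_ofReal]
        · exact (myIntegrableOn_id_mul_exp' ha).const_mul _
        · filter_upwards [ae_restrict_mem measurableSet_Ioi] with t ht
          have : (0:ℝ) < t := ht
          positivity
    _ = ENNReal.ofReal (2*π*(1/a^2)) := by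
        rw [integral_const_mul, myIntegral_id_mul_exp ha]

/-- For every `γ > 0` and `x ∈ ℝ`,
`∫ cos(xt) (πt/sinh(πt)) e^{−γ|t|} dt = (1/π)(S¹_γ(x) − (x²/(2π²)) S²_γ(x))`,
where `S^m_γ(x) = ∑_{k≥0} [(x/(2π))² + ((γ+π)/(2π) + k)²]^{−m}` and the integrand
at `t = 0` is understood by continuity. -/
theorem logistic_cf_cos_integral (γ : ℝ) (hγ : 0 < γ) (x : ℝ) :
    ∫ t : ℝ,
        Real.cos (x * t) * (if t = 0 then (1 : ℝ) else π * t / Real.sinh (π * t))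
          * Real.exp (-γ * |t|) =
      (1 / π) *
        ((∑' k : ℕ, ((x / (2 * π)) ^ 2 + ((γ + π) / (2 * π) + (k : ℝ)) ^ 2)⁻¹)
          - x ^ 2 / (2 * π ^ 2) *
            ∑' k : ℕ, (((x / (2 * π)) ^ 2 + ((γ + π) / (2 * π) + (k : ℝ)) ^ 2) ^ 2)⁻¹) := by
  have hπ : (0:ℝ) < π := Real.pi_pos
  set c0 : ℝ := (γ + π) / (2 * π) with hc0_def
  have hc0 : 0 < c0 := by positivity
  set f : ℝ → ℝ := fun u => Real.cos (x * u) *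
    (if u = 0 then (1:ℝ) else π * u / Real.sinh (π * u)) * Real.exp (-γ * u) with hf_def
  -- Step 1: reduce to Ioi 0
  have habs : ∀ t : ℝ, Real.cos (x * t) * (if t = 0 then (1:ℝ) else π * t / Real.sinh (π * t))
      * Real.exp (-γ * |t|) = f |t| := by
    intro t
    rcases lt_trichotomy t 0 with ht|ht|ht
    · have h1 : |t| = -t := abs_of_neg ht
      simp only [hf_def, h1, if_neg (ne_of_lt ht), if_neg (by intro h; linarith [neg_eq_zero.mp h] : ¬ (-t = 0))]
      have hcos : Real.cos (x * -t) = Real.cos (x*t) := by rw [mul_neg, Real.cos_neg]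
      have hsinh : π * -t / Real.sinh (π * -t) = π * t / Real.sinh (π * t) := by
        rw [mul_neg, Real.sinh_neg, neg_div_neg_eq]
      rw [hcos, hsinh]
    · subst ht; simp [hf_def]
    · rw [abs_of_pos ht]
  have h1 : (∫ t : ℝ, Real.cos (x * t) * (if t = 0 then (1:ℝ) else π * t / Real.sinh (π * t))
      * Real.exp (-γ * |t|)) = ∫ t : ℝ, f |t| :=
    integral_congr_ae (Eventually.of_forall habs)
  rw [h1, integral_comp_abs (f := f)]
  -- Step 2: series expansion on Ioi 0
  have hseries : ∀ t ∈ Ioi (0:ℝ), f t = ∑' k : ℕ, myH γ x k t := by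
    intro t ht
    have ht' : (0:ℝ) < t := ht
    have hπt : 0 < π * t := mul_pos hπ ht'
    have hsinh : Real.sinh (π*t) ≠ 0 := ne_of_gt (by rwa [Real.sinh_pos_iff])
    have : ∑' k : ℕ, myH γ x k t
        = (Real.cos (x*t) * (2*π*t) * Real.exp (-(γ*t))) * ∑' k : ℕ, Real.exp (-((2*(k:ℝ)+1)*(π*t))) := by
      rw [← tsum_mul_left]
      rfl
    rw [this, myTsum_exp_odd hπt]
    simp only [hf_def, if_neg (ne_of_gt ht')]
    rw [show -γ * t = -(γ*t) by ring]
    field_simp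
  rw [setIntegral_congr_fun measurableSet_Ioi hseries]
  -- Step 3: swap integral and sum
  have hSsum : Summable (fun k : ℕ => 2*π*(1/(γ + (2*(k:ℝ)+1)*π)^2)) := by
    have base := mySummable_inv_sq_add hc0
    refine (base.mul_left (2*π*((2*π)^2)⁻¹)).congr fun k => ?_
    have heq : γ + (2*(k:ℝ)+1)*π = 2*π*(c0+(k:ℝ)) := by
      rw [hc0_def]; field_simp; ring
    rw [heq]
    field_simp
  have hswap : ∫ t in Ioi (0:ℝ), ∑' k : ℕ, myH γ x k t
      = ∑' k : ℕ, ∫ t in Ioi (0:ℝ), myH γ x k t := by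
    refine integral_tsum (fun k => (myH_cont γ x k).aestronglyMeasurable) ?_
    have hle : ∑' k : ℕ, ∫⁻ t in Ioi (0:ℝ), (‖myH γ x k t‖₊ : ENNReal)
        ≤ ∑' k : ℕ, ENNReal.ofReal (2*π*(1/(γ + (2*(k:ℝ)+1)*π)^2)) :=
      ENNReal.tsum_le_tsum (fun k => myH_lintegral γ x hγ k)
    rw [← ENNReal.ofReal_tsum_of_nonneg (fun k => by positivity) hSsum] at hle
    exact ne_top_of_le_ne_top ENNReal.ofReal_ne_top hle
  rw [hswap]
  have hIval : ∀ k : ℕ, ∫ t in Ioi (0:ℝ), myH γ x k t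
      = 2*π*(((γ + (2*(k:ℝ)+1)*π)^2 - x^2) / (((γ + (2*(k:ℝ)+1)*π)^2 + x^2)^2)) :=
    myH_integral γ x hγ
  rw [tsum_congr hIval]
  -- Step 4: final algebra
  have base := mySummable_inv_sq_add hc0
  have SA : Summable (fun k : ℕ => ((x/(2*π))^2 + (c0+(k:ℝ))^2)⁻¹) := by
    refine Summable.of_nonneg_of_le (fun k => by positivity) (fun k => ?_) base
    apply inv_anti₀ (by positivity)
    nlinarith [sq_nonneg (x/(2*π)), sq_nonneg (c0+(k:ℝ))]
  have SB : Summable (fun k : ℕ => (((x/(2*π))^2 + (c0+(k:ℝ))^2)^2)⁻¹) := by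
    refine Summable.of_nonneg_of_le (fun k => by positivity) (fun k => ?_)
      (base.mul_left (c0^2)⁻¹)
    have hk : (0:ℝ) ≤ (k:ℝ) := Nat.cast_nonneg k
    have h0 : c0^2 ≤ (c0+(k:ℝ))^2 := by nlinarith
    have h1 : c0^2 * (c0+(k:ℝ))^2 ≤ (((x/(2*π))^2 + (c0+(k:ℝ))^2))^2 := by
      nlinarith [sq_nonneg (x/(2*π)), sq_nonneg (c0+(k:ℝ)), sq_nonneg ((x/(2*π))^2)]
    calc (((x/(2*π))^2 + (c0+(k:ℝ))^2)^2)⁻¹ ≤ (c0^2 * (c0+(k:ℝ))^2)⁻¹ := by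
          apply inv_anti₀ (by positivity) h1
      _ = (c0^2)⁻¹ * ((c0+(k:ℝ))^2)⁻¹ := mul_inv _ _
  set d : ℝ := x^2/(2*π^2) with hd_def
  have e1 : d * ∑' k : ℕ, (((x/(2*π))^2 + (c0+(k:ℝ))^2)^2)⁻¹
      = ∑' k : ℕ, d * (((x/(2*π))^2 + (c0+(k:ℝ))^2)^2)⁻¹ := (tsum_mul_left).symm
  rw [e1]
  have e2 : (∑' k : ℕ, ((x/(2*π))^2 + (c0+(k:ℝ))^2)⁻¹)
      - ∑' k : ℕ, d * (((x/(2*π))^2 + (c0+(k:ℝ))^2)^2)⁻¹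
      = ∑' k : ℕ, (((x/(2*π))^2 + (c0+(k:ℝ))^2)⁻¹ - d * (((x/(2*π))^2 + (c0+(k:ℝ))^2)^2)⁻¹) :=
    ((SA.hasSum.sub (SB.mul_left d).hasSum).tsum_eq).symm
  rw [e2, ← tsum_mul_left, ← tsum_mul_left]
  refine tsum_congr fun k => ?_
  have heq : γ + (2*(k:ℝ)+1)*π = 2*π*(c0+(k:ℝ)) := by
    rw [hc0_def]; field_simp; ring
  rw [heq]
  set u : ℝ := c0 + (k:ℝ) with hu_def
  have hu : 0 < u := by
    have : (0:ℝ) ≤ (k:ℝ) := Nat.cast_nonneg k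
    rw [hu_def]; linarith
  have hD1 : (x/(2*π))^2 + u^2 ≠ 0 := by positivity
  have hD2 : (2*π*u)^2 + x^2 ≠ 0 := by positivity
  rw [hd_def]
  field_simp
  ring


end Main
end LogisticAux
end

section
/- Let X, X₁, X₂, X₃, X₄ be independent identically distributed real random variables, let σ > 0, let ψ(t) = E[e^{i t X/σ}], and let γ > 0. Then ∫_{−∞}^{∞} ( |ψ(t)|² − Re ψ(t) )² e^{-γ|t|} dt = γ E[ 1/(γ² + ((X₁−X₂)/σ)²) + 1/(γ² + ((X₁+X₂)/σ)²) ] − 2γ E[ 1/(γ² + ((X₁−X₂−X₃)/σ)²) + 1/(γ² + ((X₁−X₂+X₃)/σ)²) ] + γ E[ 1/(γ² + ((X₁−X₂−X₃+X₄)/σ)²) + 1/(γ² + ((X₁−X₂+X₃−X₄)/σ)²) ]. -/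
open MeasureTheory Real Filter Set

lemma aux_integrable_exp_neg_abs {γ : ℝ} (hγ : 0 < γ) :
    Integrable (fun t : ℝ => Real.exp (-γ * |t|)) := by
  have hIoi : IntegrableOn (fun t : ℝ => Real.exp (-γ * |t|)) (Set.Ioi 0) := by
    refine (exp_neg_integrableOn_Ioi 0 hγ).congr_fun ?_ measurableSet_Ioi
    intro x hx
    simp [abs_of_pos (show (0:ℝ) < x from hx)]
  have hIci : IntegrableOn (fun t : ℝ => Real.exp (-γ * |t|)) (Set.Ici 0) := by
    rwa [integrableOn_Ici_iff_integrableOn_Ioi]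
  have hIic : IntegrableOn (fun t : ℝ => Real.exp (-γ * |t|)) (Set.Iic 0) := by
    rw [← Measure.map_neg_eq_self (volume : Measure ℝ)]
    have m : MeasurableEmbedding fun x : ℝ => -x := (Homeomorph.neg ℝ).measurableEmbedding
    rw [m.integrableOn_map_iff]
    simpa [Function.comp_def, neg_preimage, neg_Iic] using hIci
  rw [← integrableOn_univ, ← Set.Iic_union_Ioi (a := (0:ℝ)), integrableOn_union]
  exact ⟨hIic, hIoi⟩

lemma aux_integral_cos_exp {γ : ℝ} (hγ : 0 < γ) (a : ℝ) :
    ∫ t : ℝ, Real.cos (a * t) * Real.exp (-γ * |t|) = 2 * γ * (γ ^ 2 + a ^ 2)⁻¹ := by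
  have hden : (0:ℝ) < γ ^ 2 + a ^ 2 := by positivity
  have h1 : (fun t : ℝ => Real.cos (a * t) * Real.exp (-γ * |t|))
      = fun t : ℝ => (fun s : ℝ => Real.cos (a * s) * Real.exp (-γ * s)) |t| := by
    funext t
    rcases abs_choice t with h | h <;> rw [h] <;> simp [mul_neg, Real.cos_neg]
  rw [h1, integral_comp_abs (f := fun s : ℝ => Real.cos (a * s) * Real.exp (-γ * s))]
  have derivF : ∀ x ∈ Set.Ici (0:ℝ), HasDerivAt
      (fun y : ℝ => (Real.exp (-γ * y) * (a * Real.sin (a * y) - γ * Real.cos (a * y))) / (γ ^ 2 + a ^ 2))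
      (Real.cos (a * x) * Real.exp (-γ * x)) x := by
    intro x _
    have hexp : HasDerivAt (fun y : ℝ => Real.exp (-γ * y)) (-γ * Real.exp (-γ * x)) x := by
      have := (Real.hasDerivAt_exp (-γ * x)).comp x ((hasDerivAt_id x).const_mul (-γ))
      simpa [Function.comp_def, neg_mul, mul_comm] using this
    have hsin : HasDerivAt (fun y : ℝ => Real.sin (a * y)) (Real.cos (a * x) * a) x := by
      have := (Real.hasDerivAt_sin (a * x)).comp x ((hasDerivAt_id x).const_mul a)
      simpa [Function.comp_def] using this
    have hcos : HasDerivAt (fun y : ℝ => Real.cos (a * y)) (-Real.sin (a * x) * a) x := by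
      have := (Real.hasDerivAt_cos (a * x)).comp x ((hasDerivAt_id x).const_mul a)
      simpa [Function.comp_def] using this
    have h := (hexp.mul ((hsin.const_mul a).sub (hcos.const_mul γ))).div_const (γ ^ 2 + a ^ 2)
    refine h.congr_deriv ?_
    simp only [Pi.sub_apply]
    field_simp
    ring
  have hint : IntegrableOn (fun x : ℝ => Real.cos (a * x) * Real.exp (-γ * x)) (Set.Ioi 0) := by
    refine Integrable.mono' (exp_neg_integrableOn_Ioi 0 hγ) ?_ ?_
    · exact ((Real.continuous_cos.comp (continuous_const.mul continuous_id)).mul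
        (Real.continuous_exp.comp (continuous_const.mul continuous_id))).aestronglyMeasurable
    · filter_upwards with x
      rw [norm_mul, Real.norm_eq_abs, Real.norm_eq_abs, Real.abs_exp]
      exact mul_le_of_le_one_left (Real.exp_pos _).le (Real.abs_cos_le_one _)
  have htend : Tendsto
      (fun y : ℝ => (Real.exp (-γ * y) * (a * Real.sin (a * y) - γ * Real.cos (a * y))) / (γ ^ 2 + a ^ 2))
      atTop (nhds 0) := by
    have h0 : Tendsto (fun x : ℝ => Real.exp (-γ * x)) atTop (nhds 0) := by
      have := Real.tendsto_exp_neg_atTop_nhds_zero.comp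
        (Filter.Tendsto.const_mul_atTop hγ (tendsto_id : Tendsto (fun x:ℝ => x) atTop atTop))
      simpa [Function.comp_def, neg_mul] using this
    have h0' : Tendsto (fun x : ℝ => Real.exp (-γ * x) * ((|a| + γ) / (γ ^ 2 + a ^ 2))) atTop (nhds 0) := by
      simpa using h0.mul_const ((|a| + γ) / (γ ^ 2 + a ^ 2))
    refine squeeze_zero_norm (fun x => ?_) h0'
    have h₁ : |a * Real.sin (a * x)| ≤ |a| := by
      rw [abs_mul]
      exact mul_le_of_le_one_right (abs_nonneg a) (Real.abs_sin_le_one _)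
    have h₂ : |γ * Real.cos (a * x)| ≤ γ := by
      rw [abs_mul, abs_of_pos hγ]
      exact mul_le_of_le_one_right hγ.le (Real.abs_cos_le_one _)
    have h₃ : |a * Real.sin (a * x) - γ * Real.cos (a * x)| ≤ |a| + γ := by
      calc |a * Real.sin (a * x) - γ * Real.cos (a * x)|
          ≤ |a * Real.sin (a * x)| + |γ * Real.cos (a * x)| := abs_sub _ _
        _ ≤ |a| + γ := add_le_add h₁ h₂
    calc ‖(Real.exp (-γ * x) * (a * Real.sin (a * x) - γ * Real.cos (a * x))) / (γ ^ 2 + a ^ 2)‖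
        = Real.exp (-γ * x) * |a * Real.sin (a * x) - γ * Real.cos (a * x)| / (γ ^ 2 + a ^ 2) := by
          rw [Real.norm_eq_abs, abs_div, abs_of_pos hden, abs_mul, Real.abs_exp]
      _ ≤ Real.exp (-γ * x) * (|a| + γ) / (γ ^ 2 + a ^ 2) := by gcongr
      _ = Real.exp (-γ * x) * ((|a| + γ) / (γ ^ 2 + a ^ 2)) := by ring
  have hFTC := integral_Ioi_of_hasDerivAt_of_tendsto' derivF hint htend
  rw [hFTC]
  have : Real.exp (-γ * 0) = 1 := by norm_num
  simp only [mul_zero, Real.sin_zero, Real.cos_zero, this]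
  field_simp
  rw [Real.exp_zero]
  ring

lemma aux_pi4_prod (P : Measure ℝ) [IsProbabilityMeasure P] (f : Fin 4 → ℝ → ℂ) :
    ∫ v : Fin 4 → ℝ, ∏ i, f i (v i) ∂(Measure.pi fun _ => P) = ∏ i, ∫ x, f i x ∂P :=
  MeasureTheory.integral_fintype_prod_eq_prod (μ := fun _ => P) f

/-- Let `X, X₁, X₂, X₃, X₄` be i.i.d. real random variables with common
law `P` (the i.i.d. structure being encoded by the measure `P` and its fourfold
product), `σ > 0`, `ψ(t) = E[e^{itX/σ}]`, `γ > 0`.  Then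
`∫ (|ψ(t)|² − Re ψ(t))² e^{−γ|t|} dt` equals the stated combination of expectations
of `1/(γ² + (·/σ)²)` evaluated at the signed sums of `X₁,…,X₄`. -/
theorem exp_test_population_limit_w1 (P : Measure ℝ) [IsProbabilityMeasure P]
    (σ : ℝ) (hσ : 0 < σ) (γ : ℝ) (hγ : 0 < γ)
    (ψ : ℝ → ℂ)
    (hψ : ∀ t : ℝ, ψ t = ∫ x, Complex.exp (Complex.I * t * (x / σ)) ∂P) :
    ∫ t : ℝ, ((‖ψ t‖) ^ 2 - (ψ t).re) ^ 2 * Real.exp (-γ * |t|) =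
      γ * (∫ v : Fin 4 → ℝ,
            ((γ ^ 2 + ((v 0 - v 1) / σ) ^ 2)⁻¹ + (γ ^ 2 + ((v 0 + v 1) / σ) ^ 2)⁻¹)
          ∂(Measure.pi fun _ => P))
      - 2 * γ * (∫ v : Fin 4 → ℝ,
            ((γ ^ 2 + ((v 0 - v 1 - v 2) / σ) ^ 2)⁻¹
              + (γ ^ 2 + ((v 0 - v 1 + v 2) / σ) ^ 2)⁻¹)
          ∂(Measure.pi fun _ => P))
      + γ * (∫ v : Fin 4 → ℝ,
            ((γ ^ 2 + ((v 0 - v 1 - v 2 + v 3) / σ) ^ 2)⁻¹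
              + (γ ^ 2 + ((v 0 - v 1 + v 2 - v 3) / σ) ^ 2)⁻¹)
          ∂(Measure.pi fun _ => P)) := by
  set μ : Measure (Fin 4 → ℝ) := Measure.pi fun _ => P with hμ
  haveI : IsProbabilityMeasure μ := by rw [hμ]; infer_instance
  -- factor integrals
  have hψ1 : ∀ t : ℝ, ∫ x, Complex.exp (Complex.I * ((1:ℝ) * t : ℝ) * (x / σ)) ∂P = ψ t := by
    intro t
    rw [hψ t]
    norm_num
  have hψneg : ∀ t : ℝ, ∫ x, Complex.exp (Complex.I * (((-1:ℝ)) * t : ℝ) * (x / σ)) ∂P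
      = (starRingEnd ℂ) (ψ t) := by
    intro t
    rw [hψ t, ← integral_conj]
    congr 1
    funext x
    rw [← Complex.exp_conj]
    congr 1
    simp only [map_mul, map_div₀, Complex.conj_I, Complex.conj_ofReal]
    push_cast
    ring
  have hψ0 : ∀ t : ℝ, ∫ x, Complex.exp (Complex.I * (((0:ℝ)) * t : ℝ) * (x / σ)) ∂P = 1 := by
    intro t
    have h : ∀ x : ℝ, Complex.exp (Complex.I * (((0:ℝ)) * t : ℝ) * (x / σ)) = 1 := by
      intro x
      norm_num
    simp only [h]
    simp
  -- the key product formula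
  have key : ∀ (L : (Fin 4 → ℝ) → ℝ) (c₀ c₁ c₂ c₃ : ℝ),
      (∀ v : Fin 4 → ℝ, L v = c₀ * v 0 + c₁ * v 1 + c₂ * v 2 + c₃ * v 3) → ∀ t : ℝ,
      ∫ v, Real.cos (L v / σ * t) ∂μ =
        ((∫ x, Complex.exp (Complex.I * ((c₀ * t : ℝ)) * (x / σ)) ∂P) *
         (∫ x, Complex.exp (Complex.I * ((c₁ * t : ℝ)) * (x / σ)) ∂P) *
         (∫ x, Complex.exp (Complex.I * ((c₂ * t : ℝ)) * (x / σ)) ∂P) *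
         (∫ x, Complex.exp (Complex.I * ((c₃ * t : ℝ)) * (x / σ)) ∂P)).re := by
    intro L c₀ c₁ c₂ c₃ hL t
    have hLm : Measurable L := by
      have hLe : L = fun v => c₀ * v 0 + c₁ * v 1 + c₂ * v 2 + c₃ * v 3 := funext hL
      rw [hLe]
      have m : ∀ i : Fin 4, Measurable fun v : Fin 4 → ℝ => v i := fun i => measurable_pi_apply i
      exact ((((m 0).const_mul c₀).add ((m 1).const_mul c₁)).add
        ((m 2).const_mul c₂)).add ((m 3).const_mul c₃)
    set f : Fin 4 → ℝ → ℂ :=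
      ![fun x => Complex.exp (Complex.I * ((c₀ * t : ℝ)) * (x / σ)),
        fun x => Complex.exp (Complex.I * ((c₁ * t : ℝ)) * (x / σ)),
        fun x => Complex.exp (Complex.I * ((c₂ * t : ℝ)) * (x / σ)),
        fun x => Complex.exp (Complex.I * ((c₃ * t : ℝ)) * (x / σ))] with hf
    have hfe : ∀ v : Fin 4 → ℝ, Complex.exp ((L v / σ * t : ℝ) * Complex.I) = ∏ i, f i (v i) := by
      intro v
      rw [Fin.prod_univ_four]
      simp only [hf, Matrix.cons_val_zero, Matrix.cons_val_one, Matrix.head_cons,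
        Matrix.cons_val_two, Matrix.tail_cons, Matrix.cons_val_three, Matrix.head_fin_const]
      rw [← Complex.exp_add, ← Complex.exp_add, ← Complex.exp_add]
      congr 1
      rw [hL v]
      push_cast
      ring
    have hfi : Integrable (fun v : Fin 4 → ℝ => Complex.exp ((L v / σ * t : ℝ) * Complex.I)) μ := by
      refine (integrable_const (1:ℝ)).mono' ?_ ?_
      · exact (Complex.measurable_exp.comp
          ((Complex.measurable_ofReal.comp ((hLm.div_const σ).mul_const t)).mul_const
            Complex.I)).aestronglyMeasurable
      · filter_upwards with v
        rw [Complex.norm_exp]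
        simp
    calc ∫ v, Real.cos (L v / σ * t) ∂μ
        = ∫ v, (Complex.exp ((L v / σ * t : ℝ) * Complex.I)).re ∂μ := by
          congr 1
          funext v
          rw [Complex.exp_ofReal_mul_I_re]
      _ = (∫ v, Complex.exp ((L v / σ * t : ℝ) * Complex.I) ∂μ).re := by
          exact integral_re hfi
      _ = (∫ v, ∏ i, f i (v i) ∂μ).re := by
          congr 1
          exact integral_congr_ae (Filter.Eventually.of_forall hfe)
      _ = (∏ i, ∫ x, f i x ∂P).re := by rw [hμ, aux_pi4_prod]
      _ = _ := by
          rw [Fin.prod_univ_four]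
          simp only [hf, Matrix.cons_val_zero, Matrix.cons_val_one, Matrix.head_cons,
            Matrix.cons_val_two, Matrix.tail_cons, Matrix.cons_val_three, Matrix.head_fin_const]
  -- Fubini / the one-dimensional integral
  have master : ∀ u : (Fin 4 → ℝ) → ℝ, Measurable u →
      Integrable (fun t : ℝ => (∫ v, Real.cos (u v * t) ∂μ) * Real.exp (-γ * |t|)) ∧
      ∫ t : ℝ, (∫ v, Real.cos (u v * t) ∂μ) * Real.exp (-γ * |t|)
        = 2 * γ * ∫ v, (γ ^ 2 + (u v) ^ 2)⁻¹ ∂μ := by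
    intro u hu
    have hFm : AEStronglyMeasurable (fun p : ℝ × (Fin 4 → ℝ) =>
        Real.cos (u p.2 * p.1) * Real.exp (-γ * |p.1|)) (volume.prod μ) :=
      (((hu.comp measurable_snd).mul measurable_fst).cos.mul
        ((measurable_fst.abs.const_mul (-γ)).exp)).aestronglyMeasurable
    have hFi : Integrable (fun p : ℝ × (Fin 4 → ℝ) =>
        Real.cos (u p.2 * p.1) * Real.exp (-γ * |p.1|)) (volume.prod μ) := by
      have hG : Integrable (fun p : ℝ × (Fin 4 → ℝ) => Real.exp (-γ * |p.1|))
          (volume.prod μ) := by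
        have hG0 : Integrable (fun p : ℝ × (Fin 4 → ℝ) => Real.exp (-γ * |p.1|) * 1)
            (volume.prod μ) := (aux_integrable_exp_neg_abs hγ).mul_prod (integrable_const 1)
        simpa using hG0
      refine Integrable.mono' hG hFm ?_
      filter_upwards with p
      rw [norm_mul, Real.norm_eq_abs, Real.norm_eq_abs, Real.abs_exp]
      exact mul_le_of_le_one_left (Real.exp_pos _).le (Real.abs_cos_le_one _)
    have heq : (fun t : ℝ => (∫ v, Real.cos (u v * t) ∂μ) * Real.exp (-γ * |t|))
        = fun t : ℝ => ∫ v, Real.cos (u v * t) * Real.exp (-γ * |t|) ∂μ := by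
      funext t
      rw [← integral_mul_const]
    constructor
    · rw [heq]
      exact hFi.integral_prod_left
    · rw [heq]
      rw [integral_integral_swap hFi]
      have : ∀ v : Fin 4 → ℝ, ∫ t : ℝ, Real.cos (u v * t) * Real.exp (-γ * |t|)
          = 2 * γ * (γ ^ 2 + (u v) ^ 2)⁻¹ := fun v => aux_integral_cos_exp hγ (u v)
      rw [integral_congr_ae (Filter.Eventually.of_forall this)]
      rw [integral_const_mul]
  have hm : ∀ i : Fin 4, Measurable fun v : Fin 4 → ℝ => v i := fun i => measurable_pi_apply i
  -- the six cosine integrals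
  have h₁ : ∀ t : ℝ, ∫ v, Real.cos ((v 0 - v 1) / σ * t) ∂μ
      = (ψ t).re ^ 2 + (ψ t).im ^ 2 := by
    intro t
    have h := key (fun v => v 0 - v 1) 1 (-1) 0 0 (fun v => by ring) t
    rw [hψ1 t, hψneg t, hψ0 t] at h
    refine h.trans ?_
    simp only [Complex.mul_re, Complex.mul_im, Complex.conj_re, Complex.conj_im,
      Complex.one_re, Complex.one_im]
    ring
  have h₂ : ∀ t : ℝ, ∫ v, Real.cos ((v 0 + v 1) / σ * t) ∂μ
      = (ψ t).re ^ 2 - (ψ t).im ^ 2 := by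
    intro t
    have h := key (fun v => v 0 + v 1) 1 1 0 0 (fun v => by ring) t
    rw [hψ1 t, hψ0 t] at h
    refine h.trans ?_
    simp only [Complex.mul_re, Complex.mul_im, Complex.conj_re, Complex.conj_im,
      Complex.one_re, Complex.one_im]
    ring
  have h₃ : ∀ t : ℝ, ∫ v, Real.cos ((v 0 - v 1 - v 2) / σ * t) ∂μ
      = ((ψ t).re ^ 2 + (ψ t).im ^ 2) * (ψ t).re := by
    intro t
    have h := key (fun v => v 0 - v 1 - v 2) 1 (-1) (-1) 0 (fun v => by ring) t
    rw [hψ1 t, hψneg t, hψ0 t] at h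
    refine h.trans ?_
    simp only [Complex.mul_re, Complex.mul_im, Complex.conj_re, Complex.conj_im,
      Complex.one_re, Complex.one_im]
    ring
  have h₄ : ∀ t : ℝ, ∫ v, Real.cos ((v 0 - v 1 + v 2) / σ * t) ∂μ
      = ((ψ t).re ^ 2 + (ψ t).im ^ 2) * (ψ t).re := by
    intro t
    have h := key (fun v => v 0 - v 1 + v 2) 1 (-1) 1 0 (fun v => by ring) t
    rw [hψ1 t, hψneg t, hψ0 t] at h
    refine h.trans ?_
    simp only [Complex.mul_re, Complex.mul_im, Complex.conj_re, Complex.conj_im,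
      Complex.one_re, Complex.one_im]
    ring
  have h₅ : ∀ t : ℝ, ∫ v, Real.cos ((v 0 - v 1 - v 2 + v 3) / σ * t) ∂μ
      = ((ψ t).re ^ 2 + (ψ t).im ^ 2) ^ 2 := by
    intro t
    have h := key (fun v => v 0 - v 1 - v 2 + v 3) 1 (-1) (-1) 1 (fun v => by ring) t
    rw [hψ1 t, hψneg t] at h
    refine h.trans ?_
    simp only [Complex.mul_re, Complex.mul_im, Complex.conj_re, Complex.conj_im,
      Complex.one_re, Complex.one_im]
    ring
  have h₆ : ∀ t : ℝ, ∫ v, Real.cos ((v 0 - v 1 + v 2 - v 3) / σ * t) ∂μ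
      = ((ψ t).re ^ 2 + (ψ t).im ^ 2) ^ 2 := by
    intro t
    have h := key (fun v => v 0 - v 1 + v 2 - v 3) 1 (-1) 1 (-1) (fun v => by ring) t
    rw [hψ1 t, hψneg t] at h
    refine h.trans ?_
    simp only [Complex.mul_re, Complex.mul_im, Complex.conj_re, Complex.conj_im,
      Complex.one_re, Complex.one_im]
    ring
  -- masters
  obtain ⟨i₁, e₁⟩ := master (fun v => (v 0 - v 1) / σ) (((hm 0).sub (hm 1)).div_const σ)
  obtain ⟨i₂, e₂⟩ := master (fun v => (v 0 + v 1) / σ) (((hm 0).add (hm 1)).div_const σ)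
  obtain ⟨i₃, e₃⟩ := master (fun v => (v 0 - v 1 - v 2) / σ)
    ((((hm 0).sub (hm 1)).sub (hm 2)).div_const σ)
  obtain ⟨i₄, e₄⟩ := master (fun v => (v 0 - v 1 + v 2) / σ)
    ((((hm 0).sub (hm 1)).add (hm 2)).div_const σ)
  obtain ⟨i₅, e₅⟩ := master (fun v => (v 0 - v 1 - v 2 + v 3) / σ)
    (((((hm 0).sub (hm 1)).sub (hm 2)).add (hm 3)).div_const σ)
  obtain ⟨i₆, e₆⟩ := master (fun v => (v 0 - v 1 + v 2 - v 3) / σ)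
    (((((hm 0).sub (hm 1)).add (hm 2)).sub (hm 3)).div_const σ)
  -- pointwise identity
  have hpt : (fun t : ℝ => ((‖ψ t‖) ^ 2 - (ψ t).re) ^ 2 * Real.exp (-γ * |t|))
      = fun t : ℝ =>
        (1/2 : ℝ) * ((∫ v, Real.cos ((v 0 - v 1) / σ * t) ∂μ) * Real.exp (-γ * |t|))
        + (1/2 : ℝ) * ((∫ v, Real.cos ((v 0 + v 1) / σ * t) ∂μ) * Real.exp (-γ * |t|))
        - (∫ v, Real.cos ((v 0 - v 1 - v 2) / σ * t) ∂μ) * Real.exp (-γ * |t|)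
        - (∫ v, Real.cos ((v 0 - v 1 + v 2) / σ * t) ∂μ) * Real.exp (-γ * |t|)
        + (1/2 : ℝ) * ((∫ v, Real.cos ((v 0 - v 1 - v 2 + v 3) / σ * t) ∂μ) * Real.exp (-γ * |t|))
        + (1/2 : ℝ) * ((∫ v, Real.cos ((v 0 - v 1 + v 2 - v 3) / σ * t) ∂μ) * Real.exp (-γ * |t|)) := by
    funext t
    rw [h₁ t, h₂ t, h₃ t, h₄ t, h₅ t, h₆ t, Complex.sq_norm, Complex.normSq_apply]
    ring
  rw [hpt]
  have iA : Integrable (fun t : ℝ => (1/2 : ℝ) * ((∫ v, Real.cos ((v 0 - v 1) / σ * t) ∂μ) * Real.exp (-γ * |t|))) volume := i₁.const_mul _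
  have iB : Integrable (fun t : ℝ => (1/2 : ℝ) * ((∫ v, Real.cos ((v 0 + v 1) / σ * t) ∂μ) * Real.exp (-γ * |t|))) volume := i₂.const_mul _
  have iE : Integrable (fun t : ℝ => (1/2 : ℝ) * ((∫ v, Real.cos ((v 0 - v 1 - v 2 + v 3) / σ * t) ∂μ) * Real.exp (-γ * |t|))) volume := i₅.const_mul _
  have iF : Integrable (fun t : ℝ => (1/2 : ℝ) * ((∫ v, Real.cos ((v 0 - v 1 + v 2 - v 3) / σ * t) ∂μ) * Real.exp (-γ * |t|))) volume := i₆.const_mul _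
  have I12 : Integrable (fun t : ℝ => (1/2 : ℝ) * ((∫ v, Real.cos ((v 0 - v 1) / σ * t) ∂μ) * Real.exp (-γ * |t|)) + (1/2 : ℝ) * ((∫ v, Real.cos ((v 0 + v 1) / σ * t) ∂μ) * Real.exp (-γ * |t|))) volume := iA.add iB
  have I123 : Integrable (fun t : ℝ => (1/2 : ℝ) * ((∫ v, Real.cos ((v 0 - v 1) / σ * t) ∂μ) * Real.exp (-γ * |t|)) + (1/2 : ℝ) * ((∫ v, Real.cos ((v 0 + v 1) / σ * t) ∂μ) * Real.exp (-γ * |t|))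
      - (∫ v, Real.cos ((v 0 - v 1 - v 2) / σ * t) ∂μ) * Real.exp (-γ * |t|)) volume := I12.sub i₃
  have I1234 : Integrable (fun t : ℝ => (1/2 : ℝ) * ((∫ v, Real.cos ((v 0 - v 1) / σ * t) ∂μ) * Real.exp (-γ * |t|)) + (1/2 : ℝ) * ((∫ v, Real.cos ((v 0 + v 1) / σ * t) ∂μ) * Real.exp (-γ * |t|))
      - (∫ v, Real.cos ((v 0 - v 1 - v 2) / σ * t) ∂μ) * Real.exp (-γ * |t|) - (∫ v, Real.cos ((v 0 - v 1 + v 2) / σ * t) ∂μ) * Real.exp (-γ * |t|)) volume := I123.sub i₄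
  have I12345 : Integrable (fun t : ℝ => (1/2 : ℝ) * ((∫ v, Real.cos ((v 0 - v 1) / σ * t) ∂μ) * Real.exp (-γ * |t|)) + (1/2 : ℝ) * ((∫ v, Real.cos ((v 0 + v 1) / σ * t) ∂μ) * Real.exp (-γ * |t|))
      - (∫ v, Real.cos ((v 0 - v 1 - v 2) / σ * t) ∂μ) * Real.exp (-γ * |t|) - (∫ v, Real.cos ((v 0 - v 1 + v 2) / σ * t) ∂μ) * Real.exp (-γ * |t|) + (1/2 : ℝ) * ((∫ v, Real.cos ((v 0 - v 1 - v 2 + v 3) / σ * t) ∂μ) * Real.exp (-γ * |t|))) volume := I1234.add iE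
  rw [integral_add I12345 iF, integral_add I1234 iE, integral_sub I123 i₄,
    integral_sub I12 i₃, integral_add iA iB, integral_const_mul, integral_const_mul,
    integral_const_mul, integral_const_mul, e₁, e₂, e₃, e₄, e₅, e₆]
  -- split the right-hand side integrals
  have jInt : ∀ u : (Fin 4 → ℝ) → ℝ, Measurable u →
      Integrable (fun v => (γ ^ 2 + (u v) ^ 2)⁻¹) μ := by
    intro u hu
    refine (integrable_const ((γ ^ 2)⁻¹ : ℝ)).mono'
      ((measurable_const.add (hu.pow_const 2)).inv.aestronglyMeasurable) ?_
    filter_upwards with v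
    rw [Real.norm_eq_abs, abs_of_pos (by positivity)]
    exact inv_anti₀ (by positivity) (by nlinarith [sq_nonneg (u v)])
  have R₁ : ∫ v, ((γ ^ 2 + ((v 0 - v 1) / σ) ^ 2)⁻¹ + (γ ^ 2 + ((v 0 + v 1) / σ) ^ 2)⁻¹) ∂μ
      = (∫ v, (γ ^ 2 + ((v 0 - v 1) / σ) ^ 2)⁻¹ ∂μ)
        + ∫ v, (γ ^ 2 + ((v 0 + v 1) / σ) ^ 2)⁻¹ ∂μ :=
    integral_add (jInt _ (((hm 0).sub (hm 1)).div_const σ))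
      (jInt _ (((hm 0).add (hm 1)).div_const σ))
  have R₂ : ∫ v, ((γ ^ 2 + ((v 0 - v 1 - v 2) / σ) ^ 2)⁻¹
        + (γ ^ 2 + ((v 0 - v 1 + v 2) / σ) ^ 2)⁻¹) ∂μ
      = (∫ v, (γ ^ 2 + ((v 0 - v 1 - v 2) / σ) ^ 2)⁻¹ ∂μ)
        + ∫ v, (γ ^ 2 + ((v 0 - v 1 + v 2) / σ) ^ 2)⁻¹ ∂μ :=
    integral_add (jInt _ ((((hm 0).sub (hm 1)).sub (hm 2)).div_const σ))
      (jInt _ ((((hm 0).sub (hm 1)).add (hm 2)).div_const σ))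
  have R₃ : ∫ v, ((γ ^ 2 + ((v 0 - v 1 - v 2 + v 3) / σ) ^ 2)⁻¹
        + (γ ^ 2 + ((v 0 - v 1 + v 2 - v 3) / σ) ^ 2)⁻¹) ∂μ
      = (∫ v, (γ ^ 2 + ((v 0 - v 1 - v 2 + v 3) / σ) ^ 2)⁻¹ ∂μ)
        + ∫ v, (γ ^ 2 + ((v 0 - v 1 + v 2 - v 3) / σ) ^ 2)⁻¹ ∂μ :=
    integral_add (jInt _ (((((hm 0).sub (hm 1)).sub (hm 2)).add (hm 3)).div_const σ))
      (jInt _ (((((hm 0).sub (hm 1)).add (hm 2)).sub (hm 3)).div_const σ))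
  rw [R₁, R₂, R₃]
  ring
end

section
/- Let X, X₁, X₂, X₃, X₄ be independent identically distributed real random variables, let σ > 0, let ψ(t) = E[e^{i t X/σ}], and let γ > 0. Then ∫_{−∞}^{∞} ( |ψ(t)|² − Re ψ(t) )² e^{-γ t²} dt = (1/2)√(π/γ) E[ exp( −((X₁−X₂)/σ)²/(4γ) ) + exp( −((X₁+X₂)/σ)²/(4γ) ) ] − √(π/γ) E[ exp( −((X₁−X₂−X₃)/σ)²/(4γ) ) + exp( −((X₁−X₂+X₃)/σ)²/(4γ) ) ] + (1/2)√(π/γ) E[ exp( −((X₁−X₂−X₃+X₄)/σ)²/(4γ) ) + exp( −((X₁−X₂+X₃−X₄)/σ)²/(4γ) ) ]. -/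
open MeasureTheory Real



lemma etw2_gauss_cos {γ : ℝ} (hγ : 0 < γ) (u : ℝ) :
    ∫ t : ℝ, Real.cos (u * t) * Real.exp (-γ * t ^ 2) =
      Real.sqrt (π / γ) * Real.exp (-u ^ 2 / (4 * γ)) := by
  have hre : (0:ℝ) < (γ : ℂ).re := by simpa using hγ
  have key := fourierIntegral_gaussian hre (u : ℂ)
  have hint : Integrable (fun x : ℝ => Complex.exp (Complex.I * u * x) * Complex.exp (-γ * x ^ 2)) := by
    have h := integrable_cexp_quadratic hre (Complex.I * u) 0
    refine h.congr (ae_of_all _ fun x => ?_)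
    simp only [← Complex.exp_add]
    ring_nf
  have hreal : ∀ x : ℝ, (Complex.exp (Complex.I * u * x) * Complex.exp (-γ * x ^ 2)).re
      = Real.cos (u * x) * Real.exp (-γ * x ^ 2) := by
    intro x
    have h1 : Complex.I * u * x = ((u * x : ℝ) : ℂ) * Complex.I := by push_cast; ring
    have h2 : (-γ * x ^ 2 : ℂ) = ((-γ * x ^ 2 : ℝ) : ℂ) := by push_cast; ring
    rw [h1, h2, ← Complex.ofReal_exp, Complex.mul_re, Complex.exp_ofReal_mul_I_re]
    simp only [Complex.ofReal_re, Complex.ofReal_im, mul_zero, sub_zero]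
  have hL : (∫ x : ℝ, Complex.exp (Complex.I * u * x) * Complex.exp (-γ * x ^ 2)).re
      = ∫ t : ℝ, Real.cos (u * t) * Real.exp (-γ * t ^ 2) := by
    rw [show (∫ x : ℝ, Complex.exp (Complex.I * u * x) * Complex.exp (-γ * x ^ 2)).re
        = RCLike.re (∫ x : ℝ, Complex.exp (Complex.I * u * x) * Complex.exp (-γ * x ^ 2)) from rfl,
      ← integral_re hint]
    refine integral_congr_ae (ae_of_all _ fun x => ?_)
    simpa using hreal x
  rw [← hL, key]
  have hγ0 : (γ : ℂ) ≠ 0 := by exact_mod_cast hγ.ne'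
  have h4 : (-(u:ℂ) ^ 2 / (4 * γ)) = ((-u ^ 2 / (4 * γ) : ℝ) : ℂ) := by push_cast; ring
  have hpow : ((π / γ : ℂ)) ^ (1/2 : ℂ) = ((Real.sqrt (π / γ) : ℝ) : ℂ) := by
    have hpiγ : (0:ℝ) ≤ π / γ := div_nonneg Real.pi_pos.le hγ.le
    rw [show ((π / γ : ℂ)) = (((π / γ : ℝ)) : ℂ) by push_cast; ring,
      show (1/2 : ℂ) = ((1/2 : ℝ) : ℂ) by norm_num,
      ← Complex.ofReal_cpow hpiγ, Real.rpow_def_of_pos (by positivity), Real.sqrt_eq_rpow,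
      Real.rpow_def_of_pos (by positivity)]
  rw [h4, hpow, ← Complex.ofReal_exp, ← Complex.ofReal_mul]
  exact Complex.ofReal_re _


lemma etw2_integrable_cos_gauss {γ : ℝ} (hγ : 0 < γ) (u : ℝ) :
    Integrable (fun t : ℝ => Real.cos (u * t) * Real.exp (-γ * t ^ 2)) := by
  refine (integrable_exp_neg_mul_sq hγ).mono' ?_ ?_
  · exact ((Real.continuous_cos.comp (continuous_const.mul continuous_id)).mul
      (Real.continuous_exp.comp (by continuity))).aestronglyMeasurable
  · refine ae_of_all _ fun t => ?_
    rw [norm_mul, Real.norm_eq_abs, Real.norm_eq_abs, abs_of_pos (Real.exp_pos _)]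
    calc |Real.cos (u*t)| * Real.exp (-γ * t^2) ≤ 1 * Real.exp (-γ*t^2) := by
          gcongr; exact Real.abs_cos_le_one _
      _ = Real.exp (-γ*t^2) := one_mul _

lemma etw2_integrable_coscos_gauss {γ : ℝ} (hγ : 0 < γ) (u v : ℝ) :
    Integrable (fun t : ℝ => Real.cos (u * t) * Real.cos (v * t) * Real.exp (-γ * t ^ 2)) := by
  have h : ∀ t : ℝ, Real.cos (u*t) * Real.cos (v*t) * Real.exp (-γ*t^2)
      = (Real.cos ((u-v)*t) * Real.exp (-γ*t^2) + Real.cos ((u+v)*t) * Real.exp (-γ*t^2)) / 2 := by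
    intro t
    have : Real.cos ((u-v)*t) + Real.cos ((u+v)*t) = 2 * (Real.cos (u*t) * Real.cos (v*t)) := by
      rw [show (u-v)*t = u*t - v*t by ring, show (u+v)*t = u*t + v*t by ring,
        Real.cos_sub, Real.cos_add]; ring
    linear_combination (-(Real.exp (-γ*t^2))/2) * this
  simp only [h]
  exact (((etw2_integrable_cos_gauss hγ (u-v)).add (etw2_integrable_cos_gauss hγ (u+v))).div_const 2)

lemma etw2_gauss_coscos {γ : ℝ} (hγ : 0 < γ) (u v : ℝ) :
    ∫ t : ℝ, Real.cos (u * t) * Real.cos (v * t) * Real.exp (-γ * t ^ 2) =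
      (Real.sqrt (π / γ) * Real.exp (-(u-v) ^ 2 / (4 * γ))
        + Real.sqrt (π / γ) * Real.exp (-(u+v) ^ 2 / (4 * γ))) / 2 := by
  have h : ∀ t : ℝ, Real.cos (u*t) * Real.cos (v*t) * Real.exp (-γ*t^2)
      = (Real.cos ((u-v)*t) * Real.exp (-γ*t^2) + Real.cos ((u+v)*t) * Real.exp (-γ*t^2)) / 2 := by
    intro t
    have : Real.cos ((u-v)*t) + Real.cos ((u+v)*t) = 2 * (Real.cos (u*t) * Real.cos (v*t)) := by
      rw [show (u-v)*t = u*t - v*t by ring, show (u+v)*t = u*t + v*t by ring,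
        Real.cos_sub, Real.cos_add]; ring
    linear_combination (-(Real.exp (-γ*t^2))/2) * this
  simp only [h]
  rw [integral_div, integral_add (etw2_integrable_cos_gauss hγ (u-v)) (etw2_integrable_cos_gauss hγ (u+v)),
    etw2_gauss_cos hγ, etw2_gauss_cos hγ]

/-- The main `t`-integral. -/
lemma etw2_gauss_quad {γ : ℝ} (hγ : 0 < γ) (a b c d : ℝ) :
    ∫ t : ℝ, (Real.cos (a * t) - Real.cos (b * t)) * (Real.cos (c * t) - Real.cos (d * t))
        * Real.exp (-γ * t ^ 2) =
      (Real.sqrt (π / γ) * Real.exp (-(a-c) ^ 2 / (4 * γ))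
        + Real.sqrt (π / γ) * Real.exp (-(a+c) ^ 2 / (4 * γ))
        - Real.sqrt (π / γ) * Real.exp (-(a-d) ^ 2 / (4 * γ))
        - Real.sqrt (π / γ) * Real.exp (-(a+d) ^ 2 / (4 * γ))
        - Real.sqrt (π / γ) * Real.exp (-(b-c) ^ 2 / (4 * γ))
        - Real.sqrt (π / γ) * Real.exp (-(b+c) ^ 2 / (4 * γ))
        + Real.sqrt (π / γ) * Real.exp (-(b-d) ^ 2 / (4 * γ))
        + Real.sqrt (π / γ) * Real.exp (-(b+d) ^ 2 / (4 * γ))) / 2 := by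
  have h : ∀ t : ℝ, (Real.cos (a*t) - Real.cos (b*t)) * (Real.cos (c*t) - Real.cos (d*t))
        * Real.exp (-γ*t^2)
      = Real.cos (a*t) * Real.cos (c*t) * Real.exp (-γ*t^2)
        - Real.cos (a*t) * Real.cos (d*t) * Real.exp (-γ*t^2)
        - Real.cos (b*t) * Real.cos (c*t) * Real.exp (-γ*t^2)
        + Real.cos (b*t) * Real.cos (d*t) * Real.exp (-γ*t^2) := fun t => by ring
  simp only [h]
  have i1 := etw2_integrable_coscos_gauss hγ a c
  have i2 := etw2_integrable_coscos_gauss hγ a d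
  have i3 := etw2_integrable_coscos_gauss hγ b c
  have i4 := etw2_integrable_coscos_gauss hγ b d
  have i12 : Integrable (fun t : ℝ => Real.cos (a*t) * Real.cos (c*t) * Real.exp (-γ*t^2)
      - Real.cos (a*t) * Real.cos (d*t) * Real.exp (-γ*t^2)) := i1.sub i2
  have i123 : Integrable (fun t : ℝ => Real.cos (a*t) * Real.cos (c*t) * Real.exp (-γ*t^2)
      - Real.cos (a*t) * Real.cos (d*t) * Real.exp (-γ*t^2)
      - Real.cos (b*t) * Real.cos (c*t) * Real.exp (-γ*t^2)) := i12.sub i3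
  rw [integral_add i123 i4, integral_sub i12 i3, integral_sub i1 i2,
    etw2_gauss_coscos hγ, etw2_gauss_coscos hγ, etw2_gauss_coscos hγ, etw2_gauss_coscos hγ]
  ring


variable {P : Measure ℝ} [IsProbabilityMeasure P]

lemma etw2_integrable_bdd {α : Type*} [MeasurableSpace α] {μ : Measure α} [IsFiniteMeasure μ]
    (f : α → ℝ) (hf : AEStronglyMeasurable f μ) (C : ℝ) (h : ∀ x, |f x| ≤ C) :
    Integrable f μ := by
  refine (integrable_const C).mono' hf (ae_of_all _ fun x => ?_)
  simpa [Real.norm_eq_abs] using h x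

lemma etw2_integrable_bdd_complex {α : Type*} [MeasurableSpace α] {μ : Measure α} [IsFiniteMeasure μ]
    (f : α → ℂ) (hf : AEStronglyMeasurable f μ) (C : ℝ) (h : ∀ x, ‖f x‖ ≤ C) :
    Integrable f μ := by
  refine (integrable_const C).mono' hf (ae_of_all _ fun x => ?_)
  simpa using h x

/-- representation of `|ψ t|² - Re ψ t` as an integral over `P × P`. -/
lemma etw2_psi_rep (σ : ℝ) (hσ : 0 < σ) (ψ : ℝ → ℂ)
    (hψ : ∀ t : ℝ, ψ t = ∫ x, Complex.exp (Complex.I * t * (x / σ)) ∂P) (t : ℝ) :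
    (‖ψ t‖) ^ 2 - (ψ t).re =
      ∫ z : ℝ × ℝ, (Real.cos ((z.1 - z.2) / σ * t) - Real.cos (z.1 / σ * t)) ∂(P.prod P) := by
  have mexp : ∀ s : ℝ, Continuous fun x : ℝ => Complex.exp (Complex.I * s * (x / σ)) := fun s =>
    Complex.continuous_exp.comp (continuous_const.mul (Complex.continuous_ofReal.div_const _))
  have hint : Integrable (fun x : ℝ => Complex.exp (Complex.I * t * (x / σ))) P := by
    refine etw2_integrable_bdd_complex _ (mexp t).aestronglyMeasurable 1 fun x => ?_
    rw [show Complex.I * (t:ℂ) * ((x:ℂ) / (σ:ℂ)) = ((x / σ * t : ℝ) : ℂ) * Complex.I by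
      push_cast; ring]
    rw [Complex.norm_exp_ofReal_mul_I]
  have hre : (ψ t).re = ∫ x, Real.cos (x / σ * t) ∂P := by
    rw [hψ t, show (∫ x, Complex.exp (Complex.I * t * (x / σ)) ∂P).re
        = RCLike.re (∫ x, Complex.exp (Complex.I * t * (x / σ)) ∂P) from rfl, ← integral_re hint]
    refine integral_congr_ae (ae_of_all _ fun x => ?_)
    have : Complex.I * (t:ℂ) * ((x:ℂ) / (σ:ℂ)) = ((x / σ * t : ℝ) : ℂ) * Complex.I := by
      push_cast; ring
    simp only [this]
    have h2 := Complex.exp_ofReal_mul_I_re (x / σ * t)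
    push_cast at h2 ⊢
    simpa using h2
  have hcont1 : Continuous fun z : ℝ × ℝ => Real.cos ((z.1 - z.2) / σ * t) :=
    Real.continuous_cos.comp (((continuous_fst.sub continuous_snd).div_const σ).mul
      continuous_const)
  have hcont2 : Continuous fun z : ℝ × ℝ => Real.cos (z.1 / σ * t) :=
    Real.continuous_cos.comp ((continuous_fst.div_const σ).mul continuous_const)
  have habs : (‖ψ t‖) ^ 2 = ∫ z : ℝ × ℝ, Real.cos ((z.1 - z.2) / σ * t) ∂(P.prod P) := by
    have h1 : ((‖ψ t‖ : ℝ) : ℂ) ^ 2 = ψ t * (starRingEnd ℂ) (ψ t) := by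
      rw [Complex.mul_conj, ← Complex.sq_norm]; push_cast; ring
    have hconj : (starRingEnd ℂ) (ψ t) = ∫ y, Complex.exp (-(Complex.I * t * (y / σ))) ∂P := by
      rw [hψ t, ← integral_conj]
      congr 1; funext y
      rw [← Complex.exp_conj]
      congr 1
      simp only [map_mul, map_div₀, Complex.conj_I, Complex.conj_ofReal]
      ring
    have hprod : ψ t * (starRingEnd ℂ) (ψ t)
        = ∫ z : ℝ × ℝ, Complex.exp (Complex.I * t * (z.1 / σ)) *
            Complex.exp (-(Complex.I * t * (z.2 / σ))) ∂(P.prod P) := by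
      rw [hconj, hψ t, ← integral_prod_mul]
    have key : ∀ z : ℝ × ℝ, Complex.exp (Complex.I * t * (z.1 / σ)) *
        Complex.exp (-(Complex.I * t * (z.2 / σ)))
        = Complex.exp ((((z.1 - z.2) / σ * t : ℝ) : ℂ) * Complex.I) := by
      intro z
      rw [← Complex.exp_add]
      congr 1
      push_cast
      field_simp
      ring
    have hintz : Integrable (fun z : ℝ × ℝ => Complex.exp (Complex.I * t * (z.1 / σ)) *
        Complex.exp (-(Complex.I * t * (z.2 / σ)))) (P.prod P) := by
      refine etw2_integrable_bdd_complex _ ?_ 1 fun z => ?_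
      · exact ((Complex.continuous_exp.comp (continuous_const.mul
          ((Complex.continuous_ofReal.comp continuous_fst).div_const _))).mul
          (Complex.continuous_exp.comp (continuous_neg.comp (continuous_const.mul
          ((Complex.continuous_ofReal.comp continuous_snd).div_const _))))).aestronglyMeasurable
      · rw [key z, Complex.norm_exp_ofReal_mul_I]
    have : (((‖ψ t‖ : ℝ) : ℂ) ^ 2).re
        = ∫ z : ℝ × ℝ, Real.cos ((z.1 - z.2) / σ * t) ∂(P.prod P) := by
      rw [h1, hprod, show (∫ z : ℝ × ℝ, Complex.exp (Complex.I * t * (z.1 / σ)) *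
            Complex.exp (-(Complex.I * t * (z.2 / σ))) ∂(P.prod P)).re
          = RCLike.re (∫ z : ℝ × ℝ, Complex.exp (Complex.I * t * (z.1 / σ)) *
            Complex.exp (-(Complex.I * t * (z.2 / σ))) ∂(P.prod P)) from rfl, ← integral_re hintz]
      refine integral_congr_ae (ae_of_all _ fun z => ?_)
      simp only [key z]
      have h2 := Complex.exp_ofReal_mul_I_re ((z.1 - z.2) / σ * t)
      push_cast at h2 ⊢
      simpa using h2
    simpa [← Complex.ofReal_pow] using this
  have hcos_int : Integrable (fun z : ℝ × ℝ => Real.cos ((z.1 - z.2) / σ * t)) (P.prod P) :=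
    etw2_integrable_bdd _ hcont1.aestronglyMeasurable 1 fun z => Real.abs_cos_le_one _
  have hcos_int2 : Integrable (fun z : ℝ × ℝ => Real.cos (z.1 / σ * t)) (P.prod P) :=
    etw2_integrable_bdd _ hcont2.aestronglyMeasurable 1 fun z => Real.abs_cos_le_one _
  have hfst : (ψ t).re = ∫ z : ℝ × ℝ, Real.cos (z.1 / σ * t) ∂(P.prod P) := by
    rw [hre, integral_fun_fst (f := fun x : ℝ => Real.cos (x / σ * t))]
    simp
  rw [habs, hfst, ← integral_sub hcos_int hcos_int2]


lemma etw2_abs_int_le {α : Type*} [MeasurableSpace α] (μ : Measure α) [IsProbabilityMeasure μ]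
    (f : α → ℝ) (C : ℝ) (h : ∀ x, |f x| ≤ C) : |∫ x, f x ∂μ| ≤ C := by
  have := norm_integral_le_of_norm_le_const (μ := μ) (f := f) (C := C)
    (ae_of_all _ fun x => by simpa [Real.norm_eq_abs] using h x)
  simpa [Real.norm_eq_abs] using this

/-- reduce an integral over `Measure.pi (Fin 4)` to iterated integrals. -/
lemma etw2_integral_pi4 (f : ℝ → ℝ → ℝ → ℝ → ℝ)
    (hm : Measurable fun p : ℝ × ℝ × ℝ × ℝ => f p.1 p.2.1 p.2.2.1 p.2.2.2)
    (C : ℝ) (hb : ∀ a b c d, |f a b c d| ≤ C) :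
    ∫ v : Fin 4 → ℝ, f (v 0) (v 1) (v 2) (v 3) ∂(Measure.pi fun _ => P)
      = ∫ a, ∫ b, ∫ c, ∫ d, f a b c d ∂P ∂P ∂P ∂P := by
  -- step 1 : Fin 4
  have h1 := (measurePreserving_piFinSuccAbove (fun _ : Fin 4 => P) 0).integral_comp'
    (fun q : ℝ × (Fin 3 → ℝ) => f q.1 (q.2 0) (q.2 1) (q.2 2))
  have e1 : ∀ v : Fin 4 → ℝ,
      (fun q : ℝ × (Fin 3 → ℝ) => f q.1 (q.2 0) (q.2 1) (q.2 2))
        ((MeasurableEquiv.piFinSuccAbove (fun _ : Fin 4 => ℝ) 0) v)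
      = f (v 0) (v 1) (v 2) (v 3) := fun v => rfl
  simp only [e1] at h1
  rw [h1]
  have hm1 : Measurable fun q : ℝ × (Fin 3 → ℝ) => f q.1 (q.2 0) (q.2 1) (q.2 2) := by
    have h : Measurable fun q : ℝ × (Fin 3 → ℝ) => (q.1, ((q.2 0), ((q.2 1), (q.2 2)))) :=
      measurable_fst.prodMk (((measurable_pi_apply 0).comp measurable_snd).prodMk
        (((measurable_pi_apply 1).comp measurable_snd).prodMk
          ((measurable_pi_apply 2).comp measurable_snd)))
    exact hm.comp h
  rw [integral_prod _ (etw2_integrable_bdd _ hm1.aestronglyMeasurable C (fun q => hb _ _ _ _))]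
  congr 1; funext a
  -- step 2 : Fin 3
  have h2 := (measurePreserving_piFinSuccAbove (fun _ : Fin 3 => P) 0).integral_comp'
    (fun q : ℝ × (Fin 2 → ℝ) => f a q.1 (q.2 0) (q.2 1))
  have e2 : ∀ v : Fin 3 → ℝ,
      (fun q : ℝ × (Fin 2 → ℝ) => f a q.1 (q.2 0) (q.2 1))
        ((MeasurableEquiv.piFinSuccAbove (fun _ : Fin 3 => ℝ) 0) v)
      = f a (v 0) (v 1) (v 2) := fun v => rfl
  simp only [e2] at h2
  rw [h2]
  have hm2 : Measurable fun q : ℝ × (Fin 2 → ℝ) => f a q.1 (q.2 0) (q.2 1) := by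
    have h : Measurable fun q : ℝ × (Fin 2 → ℝ) => ((a : ℝ), (q.1, ((q.2 0), (q.2 1)))) :=
      measurable_const.prodMk (measurable_fst.prodMk
        (((measurable_pi_apply 0).comp measurable_snd).prodMk
          ((measurable_pi_apply 1).comp measurable_snd)))
    exact hm.comp h
  rw [integral_prod _ (etw2_integrable_bdd _ hm2.aestronglyMeasurable C (fun q => hb _ _ _ _))]
  congr 1; funext b
  -- step 3 : Fin 2
  have h3 := (measurePreserving_piFinSuccAbove (fun _ : Fin 2 => P) 0).integral_comp'
    (fun q : ℝ × (Fin 1 → ℝ) => f a b q.1 (q.2 0))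
  have e3 : ∀ v : Fin 2 → ℝ,
      (fun q : ℝ × (Fin 1 → ℝ) => f a b q.1 (q.2 0))
        ((MeasurableEquiv.piFinSuccAbove (fun _ : Fin 2 => ℝ) 0) v)
      = f a b (v 0) (v 1) := fun v => rfl
  simp only [e3] at h3
  rw [h3]
  have hm3 : Measurable fun q : ℝ × (Fin 1 → ℝ) => f a b q.1 (q.2 0) := by
    have h : Measurable fun q : ℝ × (Fin 1 → ℝ) => ((a : ℝ), ((b : ℝ), (q.1, q.2 0))) :=
      measurable_const.prodMk (measurable_const.prodMk
        (measurable_fst.prodMk ((measurable_pi_apply 0).comp measurable_snd)))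
    exact hm.comp h
  rw [integral_prod _ (etw2_integrable_bdd _ hm3.aestronglyMeasurable C (fun q => hb _ _ _ _))]
  congr 1; funext c
  -- step 4 : Fin 1
  have h4 := (measurePreserving_funUnique P (Fin 1)).integral_comp' (fun d : ℝ => f a b c d)
  have e4 : ∀ w : Fin 1 → ℝ,
      (fun d : ℝ => f a b c d) ((MeasurableEquiv.funUnique (Fin 1) ℝ) w) = f a b c (w 0) :=
    fun w => rfl
  simp only [e4] at h4
  exact h4

/-- reduce an integral over `(P ×ₘ P) ×ₘ (P ×ₘ P)` to iterated integrals. -/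
lemma etw2_integral_QQ (f : ℝ → ℝ → ℝ → ℝ → ℝ)
    (hm : Measurable fun p : ℝ × ℝ × ℝ × ℝ => f p.1 p.2.1 p.2.2.1 p.2.2.2)
    (C : ℝ) (hb : ∀ a b c d, |f a b c d| ≤ C) :
    ∫ w : (ℝ × ℝ) × (ℝ × ℝ), f w.1.1 w.1.2 w.2.1 w.2.2 ∂((P.prod P).prod (P.prod P))
      = ∫ a, ∫ b, ∫ c, ∫ d, f a b c d ∂P ∂P ∂P ∂P := by
  have hmw : Measurable fun w : (ℝ × ℝ) × (ℝ × ℝ) => f w.1.1 w.1.2 w.2.1 w.2.2 := by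
    have h : Measurable fun w : (ℝ × ℝ) × (ℝ × ℝ) => (w.1.1, (w.1.2, (w.2.1, w.2.2))) :=
      (measurable_fst.comp measurable_fst).prodMk ((measurable_snd.comp measurable_fst).prodMk
        ((measurable_fst.comp measurable_snd).prodMk (measurable_snd.comp measurable_snd)))
    exact hm.comp h
  rw [integral_prod _ (etw2_integrable_bdd _ hmw.aestronglyMeasurable C (fun w => hb _ _ _ _))]
  have inner_eq : ∀ z1 : ℝ × ℝ, (∫ z2 : ℝ × ℝ, f z1.1 z1.2 z2.1 z2.2 ∂(P.prod P))
      = ∫ c, ∫ d, f z1.1 z1.2 c d ∂P ∂P := by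
    intro z1
    have hmz : Measurable fun w : ℝ × ℝ => f z1.1 z1.2 w.1 w.2 := by
      have h : Measurable fun w : ℝ × ℝ => (z1.1, (z1.2, (w.1, w.2))) :=
        measurable_const.prodMk (measurable_const.prodMk
          (measurable_fst.prodMk measurable_snd))
      exact hm.comp h
    rw [integral_prod _ (etw2_integrable_bdd _ hmz.aestronglyMeasurable C (fun w => hb _ _ _ _))]
  simp only [inner_eq]
  -- outer pair
  have hΨ : StronglyMeasurable fun q : ((ℝ × ℝ) × ℝ) × ℝ => f q.1.1.1 q.1.1.2 q.1.2 q.2 := by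
    refine Measurable.stronglyMeasurable ?_
    have h : Measurable fun q : ((ℝ × ℝ) × ℝ) × ℝ => (q.1.1.1, (q.1.1.2, (q.1.2, q.2))) :=
      ((measurable_fst.comp (measurable_fst.comp measurable_fst)).prodMk
        ((measurable_snd.comp (measurable_fst.comp measurable_fst)).prodMk
          ((measurable_snd.comp measurable_fst).prodMk measurable_snd)))
    exact hm.comp h
  have hΦ : StronglyMeasurable fun q : (ℝ × ℝ) × ℝ => ∫ d, f q.1.1 q.1.2 q.2 d ∂P :=
    hΨ.integral_prod_right'
  have hF : StronglyMeasurable fun p : ℝ × ℝ => ∫ c, ∫ d, f p.1 p.2 c d ∂P ∂P :=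
    hΦ.integral_prod_right'
  have hFb : ∀ p : ℝ × ℝ, |∫ c, ∫ d, f p.1 p.2 c d ∂P ∂P| ≤ C := by
    intro p
    exact etw2_abs_int_le P _ C fun c => etw2_abs_int_le P _ C fun d => hb _ _ _ _
  rw [integral_prod _ (etw2_integrable_bdd _ hF.aestronglyMeasurable C hFb)]

/-- swap the two variables of an iterated double integral. -/
lemma etw2_double_swap (f : ℝ → ℝ → ℝ) (hf : Integrable (Function.uncurry f) (P.prod P)) :
    ∫ a, ∫ b, f a b ∂P ∂P = ∫ a, ∫ b, f b a ∂P ∂P :=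
  integral_integral_swap hf


lemma etw2_exp_le_one {σ γ : ℝ} (hγ : 0 < γ) (x : ℝ) :
    |Real.exp (-(x / σ) ^ 2 / (4 * γ))| ≤ 1 := by
  rw [abs_of_pos (Real.exp_pos _)]
  have h : -(x / σ) ^ 2 / (4 * γ) ≤ 0 := by
    apply div_nonpos_of_nonpos_of_nonneg
    · nlinarith [sq_nonneg (x / σ)]
    · linarith
  calc Real.exp (-(x / σ) ^ 2 / (4 * γ)) ≤ Real.exp 0 := Real.exp_le_exp.mpr h
    _ = 1 := Real.exp_zero

lemma etw2_cont_exp {σ γ : ℝ} {α : Type*} [TopologicalSpace α] (l : α → ℝ) (hl : Continuous l) :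
    Continuous fun p : α => Real.exp (-(l p / σ) ^ 2 / (4 * γ)) :=
  Real.continuous_exp.comp ((((hl.div_const σ).pow 2).neg).div_const _)

/-- Let `X, X₁, X₂, X₃, X₄` be i.i.d. real random variables with common
law `P` (the i.i.d. structure being encoded by the measure `P` and its fourfold
product), `σ > 0`, `ψ(t) = E[e^{itX/σ}]`, `γ > 0`.  Then
`∫ (|ψ(t)|² − Re ψ(t))² e^{−γt²} dt` equals the stated combination of expectations of
Gaussian kernels evaluated at the signed sums of `X₁,…,X₄`. -/


theorem exp_test_population_limit_w2 (P : Measure ℝ) [IsProbabilityMeasure P]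
    (σ : ℝ) (hσ : 0 < σ) (γ : ℝ) (hγ : 0 < γ)
    (ψ : ℝ → ℂ)
    (hψ : ∀ t : ℝ, ψ t = ∫ x, Complex.exp (Complex.I * t * (x / σ)) ∂P) :
    ∫ t : ℝ, ((‖ψ t‖) ^ 2 - (ψ t).re) ^ 2 * Real.exp (-γ * t ^ 2) =
      (1 / 2) * Real.sqrt (π / γ) * (∫ v : Fin 4 → ℝ,
            (Real.exp (-((v 0 - v 1) / σ) ^ 2 / (4 * γ))
              + Real.exp (-((v 0 + v 1) / σ) ^ 2 / (4 * γ)))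
          ∂(Measure.pi fun _ => P))
      - Real.sqrt (π / γ) * (∫ v : Fin 4 → ℝ,
            (Real.exp (-((v 0 - v 1 - v 2) / σ) ^ 2 / (4 * γ))
              + Real.exp (-((v 0 - v 1 + v 2) / σ) ^ 2 / (4 * γ)))
          ∂(Measure.pi fun _ => P))
      + (1 / 2) * Real.sqrt (π / γ) * (∫ v : Fin 4 → ℝ,
            (Real.exp (-((v 0 - v 1 - v 2 + v 3) / σ) ^ 2 / (4 * γ))
              + Real.exp (-((v 0 - v 1 + v 2 - v 3) / σ) ^ 2 / (4 * γ)))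
          ∂(Measure.pi fun _ => P)) := by
  have hs : (0:ℝ) ≤ Real.sqrt (π / γ) := Real.sqrt_nonneg _
  -- continuity of the kernel
  have hKcont : Continuous (fun p : ℝ × ((ℝ × ℝ) × (ℝ × ℝ)) =>
      (Real.cos ((p.2.1.1 - p.2.1.2) / σ * p.1) - Real.cos (p.2.1.1 / σ * p.1)) *
      ((Real.cos ((p.2.2.1 - p.2.2.2) / σ * p.1) - Real.cos (p.2.2.1 / σ * p.1)) *
      Real.exp (-γ * p.1 ^ 2))) := by
    have q1 : Continuous fun p : ℝ × ((ℝ × ℝ) × (ℝ × ℝ)) => p.2.1.1 :=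
      continuous_fst.comp (continuous_fst.comp continuous_snd)
    have q2 : Continuous fun p : ℝ × ((ℝ × ℝ) × (ℝ × ℝ)) => p.2.1.2 :=
      continuous_snd.comp (continuous_fst.comp continuous_snd)
    have q3 : Continuous fun p : ℝ × ((ℝ × ℝ) × (ℝ × ℝ)) => p.2.2.1 :=
      continuous_fst.comp (continuous_snd.comp continuous_snd)
    have q4 : Continuous fun p : ℝ × ((ℝ × ℝ) × (ℝ × ℝ)) => p.2.2.2 :=
      continuous_snd.comp (continuous_snd.comp continuous_snd)
    exact ((Real.continuous_cos.comp (((q1.sub q2).div_const σ).mul continuous_fst)).sub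
        (Real.continuous_cos.comp ((q1.div_const σ).mul continuous_fst))).mul
      (((Real.continuous_cos.comp (((q3.sub q4).div_const σ).mul continuous_fst)).sub
        (Real.continuous_cos.comp ((q3.div_const σ).mul continuous_fst))).mul
      (Real.continuous_exp.comp (continuous_const.mul (continuous_fst.pow 2))))
  -- integrability of the kernel on the product measure
  have hKu : Integrable (Function.uncurry fun (t : ℝ) (w : (ℝ × ℝ) × (ℝ × ℝ)) =>
      (Real.cos ((w.1.1 - w.1.2) / σ * t) - Real.cos (w.1.1 / σ * t)) *
      ((Real.cos ((w.2.1 - w.2.2) / σ * t) - Real.cos (w.2.1 / σ * t)) *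
      Real.exp (-γ * t ^ 2))) (MeasureTheory.volume.prod ((P.prod P).prod (P.prod P))) := by
    have hdom : Integrable (fun p : ℝ × ((ℝ × ℝ) × (ℝ × ℝ)) =>
        (4 * Real.exp (-γ * p.1 ^ 2)) * 1)
        (MeasureTheory.volume.prod ((P.prod P).prod (P.prod P))) :=
      ((integrable_exp_neg_mul_sq hγ).const_mul 4).mul_prod (integrable_const 1)
    refine hdom.mono' hKcont.aestronglyMeasurable (ae_of_all _ fun p => ?_)
    have e0 : 0 < Real.exp (-γ * p.1 ^ 2) := Real.exp_pos _
    have hA : |Real.cos ((p.2.1.1 - p.2.1.2) / σ * p.1) - Real.cos (p.2.1.1 / σ * p.1)| ≤ 2 := by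
      have := Real.abs_cos_le_one ((p.2.1.1 - p.2.1.2) / σ * p.1)
      have := Real.abs_cos_le_one (p.2.1.1 / σ * p.1)
      calc |Real.cos ((p.2.1.1 - p.2.1.2) / σ * p.1) - Real.cos (p.2.1.1 / σ * p.1)|
          ≤ |Real.cos ((p.2.1.1 - p.2.1.2) / σ * p.1)| + |Real.cos (p.2.1.1 / σ * p.1)| :=
            abs_sub _ _
        _ ≤ 2 := by linarith
    have hB : |Real.cos ((p.2.2.1 - p.2.2.2) / σ * p.1) - Real.cos (p.2.2.1 / σ * p.1)| ≤ 2 := by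
      have := Real.abs_cos_le_one ((p.2.2.1 - p.2.2.2) / σ * p.1)
      have := Real.abs_cos_le_one (p.2.2.1 / σ * p.1)
      calc |Real.cos ((p.2.2.1 - p.2.2.2) / σ * p.1) - Real.cos (p.2.2.1 / σ * p.1)|
          ≤ |Real.cos ((p.2.2.1 - p.2.2.2) / σ * p.1)| + |Real.cos (p.2.2.1 / σ * p.1)| :=
            abs_sub _ _
        _ ≤ 2 := by linarith
    simp only [Function.uncurry]
    rw [Real.norm_eq_abs, abs_mul, abs_mul, abs_of_pos e0]
    have h1 : |Real.cos ((p.2.1.1 - p.2.1.2) / σ * p.1) - Real.cos (p.2.1.1 / σ * p.1)| *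
        (|Real.cos ((p.2.2.1 - p.2.2.2) / σ * p.1) - Real.cos (p.2.2.1 / σ * p.1)| *
          Real.exp (-γ * p.1 ^ 2)) ≤ 2 * (2 * Real.exp (-γ * p.1 ^ 2)) := by
      have n1 := abs_nonneg (Real.cos ((p.2.1.1 - p.2.1.2) / σ * p.1) - Real.cos (p.2.1.1 / σ * p.1))
      have n2 := abs_nonneg (Real.cos ((p.2.2.1 - p.2.2.2) / σ * p.1) - Real.cos (p.2.2.1 / σ * p.1))
      have hBe : |Real.cos ((p.2.2.1 - p.2.2.2) / σ * p.1) - Real.cos (p.2.2.1 / σ * p.1)| *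
          Real.exp (-γ * p.1 ^ 2) ≤ 2 * Real.exp (-γ * p.1 ^ 2) :=
        mul_le_mul_of_nonneg_right hB e0.le
      calc _ ≤ 2 * (|Real.cos ((p.2.2.1 - p.2.2.2) / σ * p.1) - Real.cos (p.2.2.1 / σ * p.1)| *
            Real.exp (-γ * p.1 ^ 2)) :=
          mul_le_mul_of_nonneg_right hA (mul_nonneg n2 e0.le)
        _ ≤ 2 * (2 * Real.exp (-γ * p.1 ^ 2)) := by linarith
    calc _ ≤ 2 * (2 * Real.exp (-γ * p.1 ^ 2)) := h1
      _ = 4 * Real.exp (-γ * p.1 ^ 2) * 1 := by ring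
  -- Step 1: LHS as a double integral
  have hq : ∀ t : ℝ, ((‖ψ t‖) ^ 2 - (ψ t).re) ^ 2 * Real.exp (-γ * t ^ 2)
      = ∫ w : (ℝ × ℝ) × (ℝ × ℝ),
          (Real.cos ((w.1.1 - w.1.2) / σ * t) - Real.cos (w.1.1 / σ * t)) *
          ((Real.cos ((w.2.1 - w.2.2) / σ * t) - Real.cos (w.2.1 / σ * t)) *
          Real.exp (-γ * t ^ 2)) ∂((P.prod P).prod (P.prod P)) := by
    intro t
    rw [etw2_psi_rep σ hσ ψ hψ t, pow_two, ← integral_prod_mul, ← integral_mul_const]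
    refine integral_congr_ae (ae_of_all _ fun w => ?_)
    ring
  rw [integral_congr_ae (ae_of_all _ hq), integral_integral_swap hKu]
  -- Step 2: compute the inner t-integral
  have step2 : ∀ w : (ℝ × ℝ) × (ℝ × ℝ),
      (∫ t : ℝ, (Real.cos ((w.1.1 - w.1.2) / σ * t) - Real.cos (w.1.1 / σ * t)) *
          ((Real.cos ((w.2.1 - w.2.2) / σ * t) - Real.cos (w.2.1 / σ * t)) *
          Real.exp (-γ * t ^ 2)))
      = (Real.sqrt (π / γ) * Real.exp (-((w.1.1 - w.1.2 - w.2.1 + w.2.2) / σ) ^ 2 / (4 * γ))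
        + Real.sqrt (π / γ) * Real.exp (-((w.1.1 - w.1.2 + w.2.1 - w.2.2) / σ) ^ 2 / (4 * γ))
        - Real.sqrt (π / γ) * Real.exp (-((w.1.1 - w.1.2 - w.2.1) / σ) ^ 2 / (4 * γ))
        - Real.sqrt (π / γ) * Real.exp (-((w.1.1 - w.1.2 + w.2.1) / σ) ^ 2 / (4 * γ))
        - Real.sqrt (π / γ) * Real.exp (-((w.1.1 - w.2.1 + w.2.2) / σ) ^ 2 / (4 * γ))
        - Real.sqrt (π / γ) * Real.exp (-((w.1.1 + w.2.1 - w.2.2) / σ) ^ 2 / (4 * γ))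
        + Real.sqrt (π / γ) * Real.exp (-((w.1.1 - w.2.1) / σ) ^ 2 / (4 * γ))
        + Real.sqrt (π / γ) * Real.exp (-((w.1.1 + w.2.1) / σ) ^ 2 / (4 * γ))) / 2 := by
    intro w
    have := etw2_gauss_quad hγ ((w.1.1 - w.1.2) / σ) (w.1.1 / σ) ((w.2.1 - w.2.2) / σ) (w.2.1 / σ)
    rw [show (∫ t : ℝ, (Real.cos ((w.1.1 - w.1.2) / σ * t) - Real.cos (w.1.1 / σ * t)) *
          ((Real.cos ((w.2.1 - w.2.2) / σ * t) - Real.cos (w.2.1 / σ * t)) *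
          Real.exp (-γ * t ^ 2)))
        = ∫ t : ℝ, (Real.cos ((w.1.1 - w.1.2) / σ * t) - Real.cos (w.1.1 / σ * t)) *
          (Real.cos ((w.2.1 - w.2.2) / σ * t) - Real.cos (w.2.1 / σ * t)) *
          Real.exp (-γ * t ^ 2) from integral_congr_ae (ae_of_all _ fun t => by ring), this,
      div_sub_div_same, ← add_div, div_sub_div_same, ← add_div,
      div_sub_div_same, ← add_div, div_sub_div_same, ← add_div,
      show w.1.1 - w.1.2 - (w.2.1 - w.2.2) = w.1.1 - w.1.2 - w.2.1 + w.2.2 from by ring,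
      show w.1.1 - w.1.2 + (w.2.1 - w.2.2) = w.1.1 - w.1.2 + w.2.1 - w.2.2 from by ring,
      show w.1.1 - (w.2.1 - w.2.2) = w.1.1 - w.2.1 + w.2.2 from by ring,
      show w.1.1 + (w.2.1 - w.2.2) = w.1.1 + w.2.1 - w.2.2 from by ring]
  rw [integral_congr_ae (ae_of_all _ step2)]
  -- Step 3: split the integral over the product measure
  have r1 : Continuous fun w : (ℝ × ℝ) × (ℝ × ℝ) => w.1.1 := continuous_fst.comp continuous_fst
  have r2 : Continuous fun w : (ℝ × ℝ) × (ℝ × ℝ) => w.1.2 := continuous_snd.comp continuous_fst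
  have r3 : Continuous fun w : (ℝ × ℝ) × (ℝ × ℝ) => w.2.1 := continuous_fst.comp continuous_snd
  have r4 : Continuous fun w : (ℝ × ℝ) × (ℝ × ℝ) => w.2.2 := continuous_snd.comp continuous_snd
  have atomInt : ∀ l : (ℝ × ℝ) × (ℝ × ℝ) → ℝ, Continuous l →
      Integrable (fun w => Real.sqrt (π / γ) * Real.exp (-(l w / σ) ^ 2 / (4 * γ)))
        ((P.prod P).prod (P.prod P)) := by
    intro l hl
    refine etw2_integrable_bdd _
      ((continuous_const.mul (etw2_cont_exp l hl)).aestronglyMeasurable)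
      (Real.sqrt (π / γ)) fun w => ?_
    rw [abs_mul, abs_of_nonneg hs]
    calc Real.sqrt (π / γ) * |Real.exp (-(l w / σ) ^ 2 / (4 * γ))|
        ≤ Real.sqrt (π / γ) * 1 := mul_le_mul_of_nonneg_left (etw2_exp_le_one hγ _) hs
      _ = Real.sqrt (π / γ) := mul_one _
  have i1 : Integrable (fun w : (ℝ × ℝ) × (ℝ × ℝ) => Real.sqrt (π / γ) * Real.exp (-((w.1.1 - w.1.2 - w.2.1 + w.2.2) / σ) ^ 2 / (4 * γ))) ((P.prod P).prod (P.prod P)) :=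
    atomInt _ (((r1.sub r2).sub r3).add r4)
  have i2 : Integrable (fun w : (ℝ × ℝ) × (ℝ × ℝ) => Real.sqrt (π / γ) * Real.exp (-((w.1.1 - w.1.2 + w.2.1 - w.2.2) / σ) ^ 2 / (4 * γ))) ((P.prod P).prod (P.prod P)) :=
    atomInt _ (((r1.sub r2).add r3).sub r4)
  have i3 : Integrable (fun w : (ℝ × ℝ) × (ℝ × ℝ) => Real.sqrt (π / γ) * Real.exp (-((w.1.1 - w.1.2 - w.2.1) / σ) ^ 2 / (4 * γ))) ((P.prod P).prod (P.prod P)) :=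
    atomInt _ ((r1.sub r2).sub r3)
  have i4 : Integrable (fun w : (ℝ × ℝ) × (ℝ × ℝ) => Real.sqrt (π / γ) * Real.exp (-((w.1.1 - w.1.2 + w.2.1) / σ) ^ 2 / (4 * γ))) ((P.prod P).prod (P.prod P)) :=
    atomInt _ ((r1.sub r2).add r3)
  have i5 : Integrable (fun w : (ℝ × ℝ) × (ℝ × ℝ) => Real.sqrt (π / γ) * Real.exp (-((w.1.1 - w.2.1 + w.2.2) / σ) ^ 2 / (4 * γ))) ((P.prod P).prod (P.prod P)) :=
    atomInt _ ((r1.sub r3).add r4)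
  have i6 : Integrable (fun w : (ℝ × ℝ) × (ℝ × ℝ) => Real.sqrt (π / γ) * Real.exp (-((w.1.1 + w.2.1 - w.2.2) / σ) ^ 2 / (4 * γ))) ((P.prod P).prod (P.prod P)) :=
    atomInt _ ((r1.add r3).sub r4)
  have i7 : Integrable (fun w : (ℝ × ℝ) × (ℝ × ℝ) => Real.sqrt (π / γ) * Real.exp (-((w.1.1 - w.2.1) / σ) ^ 2 / (4 * γ))) ((P.prod P).prod (P.prod P)) :=
    atomInt _ (r1.sub r3)
  have i8 : Integrable (fun w : (ℝ × ℝ) × (ℝ × ℝ) => Real.sqrt (π / γ) * Real.exp (-((w.1.1 + w.2.1) / σ) ^ 2 / (4 * γ))) ((P.prod P).prod (P.prod P)) :=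
    atomInt _ (r1.add r3)
  have j2 : Integrable (fun w : (ℝ × ℝ) × (ℝ × ℝ) => Real.sqrt (π / γ) * Real.exp (-((w.1.1 - w.1.2 - w.2.1 + w.2.2) / σ) ^ 2 / (4 * γ)) + Real.sqrt (π / γ) * Real.exp (-((w.1.1 - w.1.2 + w.2.1 - w.2.2) / σ) ^ 2 / (4 * γ))) ((P.prod P).prod (P.prod P)) := i1.add i2
  have j3 : Integrable (fun w : (ℝ × ℝ) × (ℝ × ℝ) => Real.sqrt (π / γ) * Real.exp (-((w.1.1 - w.1.2 - w.2.1 + w.2.2) / σ) ^ 2 / (4 * γ)) + Real.sqrt (π / γ) * Real.exp (-((w.1.1 - w.1.2 + w.2.1 - w.2.2) / σ) ^ 2 / (4 * γ)) - Real.sqrt (π / γ) * Real.exp (-((w.1.1 - w.1.2 - w.2.1) / σ) ^ 2 / (4 * γ))) ((P.prod P).prod (P.prod P)) := j2.sub i3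
  have j4 : Integrable (fun w : (ℝ × ℝ) × (ℝ × ℝ) => Real.sqrt (π / γ) * Real.exp (-((w.1.1 - w.1.2 - w.2.1 + w.2.2) / σ) ^ 2 / (4 * γ)) + Real.sqrt (π / γ) * Real.exp (-((w.1.1 - w.1.2 + w.2.1 - w.2.2) / σ) ^ 2 / (4 * γ)) - Real.sqrt (π / γ) * Real.exp (-((w.1.1 - w.1.2 - w.2.1) / σ) ^ 2 / (4 * γ)) - Real.sqrt (π / γ) * Real.exp (-((w.1.1 - w.1.2 + w.2.1) / σ) ^ 2 / (4 * γ))) ((P.prod P).prod (P.prod P)) := j3.sub i4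
  have j5 : Integrable (fun w : (ℝ × ℝ) × (ℝ × ℝ) => Real.sqrt (π / γ) * Real.exp (-((w.1.1 - w.1.2 - w.2.1 + w.2.2) / σ) ^ 2 / (4 * γ)) + Real.sqrt (π / γ) * Real.exp (-((w.1.1 - w.1.2 + w.2.1 - w.2.2) / σ) ^ 2 / (4 * γ)) - Real.sqrt (π / γ) * Real.exp (-((w.1.1 - w.1.2 - w.2.1) / σ) ^ 2 / (4 * γ)) - Real.sqrt (π / γ) * Real.exp (-((w.1.1 - w.1.2 + w.2.1) / σ) ^ 2 / (4 * γ)) - Real.sqrt (π / γ) * Real.exp (-((w.1.1 - w.2.1 + w.2.2) / σ) ^ 2 / (4 * γ))) ((P.prod P).prod (P.prod P)) := j4.sub i5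
  have j6 : Integrable (fun w : (ℝ × ℝ) × (ℝ × ℝ) => Real.sqrt (π / γ) * Real.exp (-((w.1.1 - w.1.2 - w.2.1 + w.2.2) / σ) ^ 2 / (4 * γ)) + Real.sqrt (π / γ) * Real.exp (-((w.1.1 - w.1.2 + w.2.1 - w.2.2) / σ) ^ 2 / (4 * γ)) - Real.sqrt (π / γ) * Real.exp (-((w.1.1 - w.1.2 - w.2.1) / σ) ^ 2 / (4 * γ)) - Real.sqrt (π / γ) * Real.exp (-((w.1.1 - w.1.2 + w.2.1) / σ) ^ 2 / (4 * γ)) - Real.sqrt (π / γ) * Real.exp (-((w.1.1 - w.2.1 + w.2.2) / σ) ^ 2 / (4 * γ)) - Real.sqrt (π / γ) * Real.exp (-((w.1.1 + w.2.1 - w.2.2) / σ) ^ 2 / (4 * γ))) ((P.prod P).prod (P.prod P)) := j5.sub i6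
  have j7 : Integrable (fun w : (ℝ × ℝ) × (ℝ × ℝ) => Real.sqrt (π / γ) * Real.exp (-((w.1.1 - w.1.2 - w.2.1 + w.2.2) / σ) ^ 2 / (4 * γ)) + Real.sqrt (π / γ) * Real.exp (-((w.1.1 - w.1.2 + w.2.1 - w.2.2) / σ) ^ 2 / (4 * γ)) - Real.sqrt (π / γ) * Real.exp (-((w.1.1 - w.1.2 - w.2.1) / σ) ^ 2 / (4 * γ)) - Real.sqrt (π / γ) * Real.exp (-((w.1.1 - w.1.2 + w.2.1) / σ) ^ 2 / (4 * γ)) - Real.sqrt (π / γ) * Real.exp (-((w.1.1 - w.2.1 + w.2.2) / σ) ^ 2 / (4 * γ)) - Real.sqrt (π / γ) * Real.exp (-((w.1.1 + w.2.1 - w.2.2) / σ) ^ 2 / (4 * γ)) + Real.sqrt (π / γ) * Real.exp (-((w.1.1 - w.2.1) / σ) ^ 2 / (4 * γ))) ((P.prod P).prod (P.prod P)) := j6.add i7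
  rw [integral_div, integral_add j7 i8, integral_add j6 i7, integral_sub j5 i6,
    integral_sub j4 i5, integral_sub j3 i4, integral_sub j2 i3, integral_add i1 i2,
    integral_const_mul, integral_const_mul, integral_const_mul, integral_const_mul,
    integral_const_mul, integral_const_mul, integral_const_mul, integral_const_mul]
  -- Step 4: reduce everything to iterated integrals
  have s1 : Continuous fun p : ℝ × ℝ × ℝ × ℝ => p.1 := continuous_fst
  have s2 : Continuous fun p : ℝ × ℝ × ℝ × ℝ => p.2.1 := continuous_fst.comp continuous_snd
  have s3 : Continuous fun p : ℝ × ℝ × ℝ × ℝ => p.2.2.1 :=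
    continuous_fst.comp (continuous_snd.comp continuous_snd)
  have s4 : Continuous fun p : ℝ × ℝ × ℝ × ℝ => p.2.2.2 :=
    continuous_snd.comp (continuous_snd.comp continuous_snd)
  rw [show (∫ w : (ℝ × ℝ) × (ℝ × ℝ), Real.exp (-((w.1.1 - w.1.2 - w.2.1 + w.2.2) / σ) ^ 2 / (4 * γ)) ∂((P.prod P).prod (P.prod P)))
      = ∫ a, ∫ b, ∫ c, ∫ d, Real.exp (-((a - b - c + d) / σ) ^ 2 / (4 * γ)) ∂P ∂P ∂P ∂P from by
      simpa using etw2_integral_QQ (P := P)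
        (fun a b c d => Real.exp (-((a - b - c + d) / σ) ^ 2 / (4 * γ)))
        (etw2_cont_exp _ (((s1.sub s2).sub s3).add s4)).measurable 1 (fun a b c d => etw2_exp_le_one hγ _),
    show (∫ w : (ℝ × ℝ) × (ℝ × ℝ), Real.exp (-((w.1.1 - w.1.2 + w.2.1 - w.2.2) / σ) ^ 2 / (4 * γ)) ∂((P.prod P).prod (P.prod P)))
      = ∫ a, ∫ b, ∫ c, ∫ d, Real.exp (-((a - b + c - d) / σ) ^ 2 / (4 * γ)) ∂P ∂P ∂P ∂P from by
      simpa using etw2_integral_QQ (P := P)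
        (fun a b c d => Real.exp (-((a - b + c - d) / σ) ^ 2 / (4 * γ)))
        (etw2_cont_exp _ (((s1.sub s2).add s3).sub s4)).measurable 1 (fun a b c d => etw2_exp_le_one hγ _),
    show (∫ w : (ℝ × ℝ) × (ℝ × ℝ), Real.exp (-((w.1.1 - w.1.2 - w.2.1) / σ) ^ 2 / (4 * γ)) ∂((P.prod P).prod (P.prod P)))
      = ∫ a, ∫ b, ∫ c, ∫ d, Real.exp (-((a - b - c) / σ) ^ 2 / (4 * γ)) ∂P ∂P ∂P ∂P from by
      simpa using etw2_integral_QQ (P := P)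
        (fun a b c d => Real.exp (-((a - b - c) / σ) ^ 2 / (4 * γ)))
        (etw2_cont_exp _ ((s1.sub s2).sub s3)).measurable 1 (fun a b c d => etw2_exp_le_one hγ _),
    show (∫ w : (ℝ × ℝ) × (ℝ × ℝ), Real.exp (-((w.1.1 - w.1.2 + w.2.1) / σ) ^ 2 / (4 * γ)) ∂((P.prod P).prod (P.prod P)))
      = ∫ a, ∫ b, ∫ c, ∫ d, Real.exp (-((a - b + c) / σ) ^ 2 / (4 * γ)) ∂P ∂P ∂P ∂P from by
      simpa using etw2_integral_QQ (P := P)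
        (fun a b c d => Real.exp (-((a - b + c) / σ) ^ 2 / (4 * γ)))
        (etw2_cont_exp _ ((s1.sub s2).add s3)).measurable 1 (fun a b c d => etw2_exp_le_one hγ _),
    show (∫ w : (ℝ × ℝ) × (ℝ × ℝ), Real.exp (-((w.1.1 - w.2.1 + w.2.2) / σ) ^ 2 / (4 * γ)) ∂((P.prod P).prod (P.prod P)))
      = ∫ a, ∫ b, ∫ c, ∫ d, Real.exp (-((a - c + d) / σ) ^ 2 / (4 * γ)) ∂P ∂P ∂P ∂P from by
      simpa using etw2_integral_QQ (P := P)
        (fun a b c d => Real.exp (-((a - c + d) / σ) ^ 2 / (4 * γ)))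
        (etw2_cont_exp _ ((s1.sub s3).add s4)).measurable 1 (fun a b c d => etw2_exp_le_one hγ _),
    show (∫ w : (ℝ × ℝ) × (ℝ × ℝ), Real.exp (-((w.1.1 + w.2.1 - w.2.2) / σ) ^ 2 / (4 * γ)) ∂((P.prod P).prod (P.prod P)))
      = ∫ a, ∫ b, ∫ c, ∫ d, Real.exp (-((a + c - d) / σ) ^ 2 / (4 * γ)) ∂P ∂P ∂P ∂P from by
      simpa using etw2_integral_QQ (P := P)
        (fun a b c d => Real.exp (-((a + c - d) / σ) ^ 2 / (4 * γ)))
        (etw2_cont_exp _ ((s1.add s3).sub s4)).measurable 1 (fun a b c d => etw2_exp_le_one hγ _),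
    show (∫ w : (ℝ × ℝ) × (ℝ × ℝ), Real.exp (-((w.1.1 - w.2.1) / σ) ^ 2 / (4 * γ)) ∂((P.prod P).prod (P.prod P)))
      = ∫ a, ∫ b, ∫ c, ∫ d, Real.exp (-((a - c) / σ) ^ 2 / (4 * γ)) ∂P ∂P ∂P ∂P from by
      simpa using etw2_integral_QQ (P := P)
        (fun a b c d => Real.exp (-((a - c) / σ) ^ 2 / (4 * γ)))
        (etw2_cont_exp _ (s1.sub s3)).measurable 1 (fun a b c d => etw2_exp_le_one hγ _),
    show (∫ w : (ℝ × ℝ) × (ℝ × ℝ), Real.exp (-((w.1.1 + w.2.1) / σ) ^ 2 / (4 * γ)) ∂((P.prod P).prod (P.prod P)))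
      = ∫ a, ∫ b, ∫ c, ∫ d, Real.exp (-((a + c) / σ) ^ 2 / (4 * γ)) ∂P ∂P ∂P ∂P from by
      simpa using etw2_integral_QQ (P := P)
        (fun a b c d => Real.exp (-((a + c) / σ) ^ 2 / (4 * γ)))
        (etw2_cont_exp _ (s1.add s3)).measurable 1 (fun a b c d => etw2_exp_le_one hγ _)]
  have piA : ∀ l : (Fin 4 → ℝ) → ℝ, Continuous l →
      Integrable (fun v => Real.exp (-(l v / σ) ^ 2 / (4 * γ))) (Measure.pi fun _ : Fin 4 => P) := by
    intro l hl
    exact etw2_integrable_bdd _ (etw2_cont_exp l hl).aestronglyMeasurable 1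
      (fun v => etw2_exp_le_one hγ _)
  have u0 : Continuous fun v : Fin 4 → ℝ => v 0 := continuous_apply 0
  have u1 : Continuous fun v : Fin 4 → ℝ => v 1 := continuous_apply 1
  have u2 : Continuous fun v : Fin 4 → ℝ => v 2 := continuous_apply 2
  have u3 : Continuous fun v : Fin 4 → ℝ => v 3 := continuous_apply 3
  rw [integral_add (piA (fun v => v 0 - v 1) (u0.sub u1)) (piA (fun v => v 0 + v 1) (u0.add u1)),
    integral_add (piA (fun v => v 0 - v 1 - v 2) ((u0.sub u1).sub u2)) (piA (fun v => v 0 - v 1 + v 2) ((u0.sub u1).add u2)),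
    integral_add (piA (fun v => v 0 - v 1 - v 2 + v 3) (((u0.sub u1).sub u2).add u3)) (piA (fun v => v 0 - v 1 + v 2 - v 3) (((u0.sub u1).add u2).sub u3))]
  rw [show (∫ v : Fin 4 → ℝ, Real.exp (-((v 0 - v 1) / σ) ^ 2 / (4 * γ)) ∂(Measure.pi fun _ => P))
      = ∫ a, ∫ b, ∫ c, ∫ d, Real.exp (-((a - b) / σ) ^ 2 / (4 * γ)) ∂P ∂P ∂P ∂P from by
      simpa using etw2_integral_pi4 (P := P)
        (fun a b c d => Real.exp (-((a - b) / σ) ^ 2 / (4 * γ)))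
        (etw2_cont_exp _ (s1.sub s2)).measurable 1 (fun a b c d => etw2_exp_le_one hγ _),
    show (∫ v : Fin 4 → ℝ, Real.exp (-((v 0 + v 1) / σ) ^ 2 / (4 * γ)) ∂(Measure.pi fun _ => P))
      = ∫ a, ∫ b, ∫ c, ∫ d, Real.exp (-((a + b) / σ) ^ 2 / (4 * γ)) ∂P ∂P ∂P ∂P from by
      simpa using etw2_integral_pi4 (P := P)
        (fun a b c d => Real.exp (-((a + b) / σ) ^ 2 / (4 * γ)))
        (etw2_cont_exp _ (s1.add s2)).measurable 1 (fun a b c d => etw2_exp_le_one hγ _),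
    show (∫ v : Fin 4 → ℝ, Real.exp (-((v 0 - v 1 - v 2) / σ) ^ 2 / (4 * γ)) ∂(Measure.pi fun _ => P))
      = ∫ a, ∫ b, ∫ c, ∫ d, Real.exp (-((a - b - c) / σ) ^ 2 / (4 * γ)) ∂P ∂P ∂P ∂P from by
      simpa using etw2_integral_pi4 (P := P)
        (fun a b c d => Real.exp (-((a - b - c) / σ) ^ 2 / (4 * γ)))
        (etw2_cont_exp _ ((s1.sub s2).sub s3)).measurable 1 (fun a b c d => etw2_exp_le_one hγ _),
    show (∫ v : Fin 4 → ℝ, Real.exp (-((v 0 - v 1 + v 2) / σ) ^ 2 / (4 * γ)) ∂(Measure.pi fun _ => P))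
      = ∫ a, ∫ b, ∫ c, ∫ d, Real.exp (-((a - b + c) / σ) ^ 2 / (4 * γ)) ∂P ∂P ∂P ∂P from by
      simpa using etw2_integral_pi4 (P := P)
        (fun a b c d => Real.exp (-((a - b + c) / σ) ^ 2 / (4 * γ)))
        (etw2_cont_exp _ ((s1.sub s2).add s3)).measurable 1 (fun a b c d => etw2_exp_le_one hγ _),
    show (∫ v : Fin 4 → ℝ, Real.exp (-((v 0 - v 1 - v 2 + v 3) / σ) ^ 2 / (4 * γ)) ∂(Measure.pi fun _ => P))
      = ∫ a, ∫ b, ∫ c, ∫ d, Real.exp (-((a - b - c + d) / σ) ^ 2 / (4 * γ)) ∂P ∂P ∂P ∂P from by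
      simpa using etw2_integral_pi4 (P := P)
        (fun a b c d => Real.exp (-((a - b - c + d) / σ) ^ 2 / (4 * γ)))
        (etw2_cont_exp _ (((s1.sub s2).sub s3).add s4)).measurable 1 (fun a b c d => etw2_exp_le_one hγ _),
    show (∫ v : Fin 4 → ℝ, Real.exp (-((v 0 - v 1 + v 2 - v 3) / σ) ^ 2 / (4 * γ)) ∂(Measure.pi fun _ => P))
      = ∫ a, ∫ b, ∫ c, ∫ d, Real.exp (-((a - b + c - d) / σ) ^ 2 / (4 * γ)) ∂P ∂P ∂P ∂P from by
      simpa using etw2_integral_pi4 (P := P)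
        (fun a b c d => Real.exp (-((a - b + c - d) / σ) ^ 2 / (4 * γ)))
        (etw2_cont_exp _ (((s1.sub s2).add s3).sub s4)).measurable 1 (fun a b c d => etw2_exp_le_one hγ _)]
  simp only [integral_const, probReal_univ, one_smul]
  have hswap1 : (∫ a, ∫ b, ∫ c, Real.exp (-((a + b - c) / σ) ^ 2 / (4 * γ)) ∂P ∂P ∂P)
      = ∫ a, ∫ b, ∫ c, Real.exp (-((a - b + c) / σ) ^ 2 / (4 * γ)) ∂P ∂P ∂P := by
    refine integral_congr_ae (ae_of_all _ fun a => ?_)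
    beta_reduce
    have hint : Integrable (Function.uncurry fun b c =>
        Real.exp (-((a + b - c) / σ) ^ 2 / (4 * γ))) (P.prod P) := by
      refine etw2_integrable_bdd _ ?_ 1 (fun p => etw2_exp_le_one hγ _)
      exact (etw2_cont_exp (fun p : ℝ × ℝ => a + p.1 - p.2)
        ((continuous_const.add continuous_fst).sub continuous_snd)).aestronglyMeasurable
    rw [etw2_double_swap _ hint]
    refine integral_congr_ae (ae_of_all _ fun b => ?_)
    beta_reduce
    refine integral_congr_ae (ae_of_all _ fun c => ?_)
    beta_reduce
    rw [show a + c - b = a - b + c from by ring]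
  have hmB : StronglyMeasurable fun p : ℝ × ℝ =>
      ∫ c, Real.exp (-((p.1 - p.2 - c) / σ) ^ 2 / (4 * γ)) ∂P := by
    have h : StronglyMeasurable fun q : (ℝ × ℝ) × ℝ =>
        Real.exp (-((q.1.1 - q.1.2 - q.2) / σ) ^ 2 / (4 * γ)) :=
      (etw2_cont_exp _ (((continuous_fst.comp continuous_fst).sub
        (continuous_snd.comp continuous_fst)).sub continuous_snd)).stronglyMeasurable
    exact h.integral_prod_right'
  have hswap2 : (∫ a, ∫ b, ∫ c, Real.exp (-((a - b - c) / σ) ^ 2 / (4 * γ)) ∂P ∂P ∂P)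
      = ∫ a, ∫ b, ∫ c, Real.exp (-((a - b + c) / σ) ^ 2 / (4 * γ)) ∂P ∂P ∂P := by
    have hint : Integrable (Function.uncurry fun a b =>
        ∫ c, Real.exp (-((a - b - c) / σ) ^ 2 / (4 * γ)) ∂P) (P.prod P) :=
      etw2_integrable_bdd _ hmB.aestronglyMeasurable 1
        (fun p => etw2_abs_int_le P _ 1 (fun c => etw2_exp_le_one hγ _))
    rw [etw2_double_swap _ hint]
    refine integral_congr_ae (ae_of_all _ fun a => ?_)
    beta_reduce
    refine integral_congr_ae (ae_of_all _ fun b => ?_)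
    beta_reduce
    refine integral_congr_ae (ae_of_all _ fun c => ?_)
    beta_reduce
    rw [show ((b - a - c) / σ) ^ 2 = ((a - b + c) / σ) ^ 2 from by ring]
  rw [hswap1, hswap2]
  ring
end
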